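/- arXiv:2003.02293 — 3 statements merged into one kernel-verified Lean document; each statement's English description precedes it below -/
import Mathlib

section
/- If a sequence {P_i} of convex bodies in ℝⁿ converges to a convex body Q in the symmetric-difference volume distance d^V (i.e., vol(P_i △ Q) → 0), then the normalized uniform measures m_{P_i} converge to m_Q in the L²-Wasserstein distance. -/
open MeasureTheory Filter Topology Metric
open scoped RealInnerProductSpace ENNReal Pointwise

/-- Euclidean space `ℝⁿ`. -/
abbrev Euc (n : ℕ) := EuclideanSpace ℝ (Fin n)

/-- A convex body in `ℝⁿ`: a compact convex set with nonempty interior. -/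
def IsConvexBody {n : ℕ} (C : Set (Euc n)) : Prop :=
  Convex ℝ C ∧ IsCompact C ∧ (interior C).Nonempty

/-- The normalized uniform (Lebesgue) probability measure on a set `C`. -/
noncomputable def unifMeasure {n : ℕ} (C : Set (Euc n)) : Measure (Euc n) :=
  (volume C)⁻¹ • volume.restrict C

/-- The optimal transport cost (squared `L²`-Wasserstein distance), as an
infimum over couplings of the integral of the squared distance. -/
noncomputable def transportCost {n : ℕ} (μ ν : Measure (Euc n)) : ℝ :=
  sInf { c : ℝ | ∃ ξ : Measure (Euc n × Euc n),
    ξ.map Prod.fst = μ ∧ ξ.map Prod.snd = ν ∧ c = ∫ p, dist p.1 p.2 ^ 2 ∂ξ }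

/-- The `L²`-Wasserstein distance. -/
noncomputable def W2 {n : ℕ} (μ ν : Measure (Euc n)) : ℝ :=
  Real.sqrt (transportCost μ ν)

/-- The support of a measure: points all of whose neighborhoods have positive measure. -/
def msupport {n : ℕ} (μ : Measure (Euc n)) : Set (Euc n) :=
  {x | ∀ U ∈ nhds x, μ U ≠ 0}

lemma costSet_bddBelow {n : ℕ} (μ ν : Measure (Euc n)) :
    BddBelow { c : ℝ | ∃ ξ : Measure (Euc n × Euc n),
      ξ.map Prod.fst = μ ∧ ξ.map Prod.snd = ν ∧ c = ∫ p, dist p.1 p.2 ^ 2 ∂ξ } := by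
  refine ⟨0, ?_⟩
  rintro c ⟨ξ, -, -, rfl⟩
  exact integral_nonneg fun p => by positivity

lemma transportCost_nonneg {n : ℕ} (μ ν : Measure (Euc n)) : 0 ≤ transportCost μ ν := by
  apply Real.sInf_nonneg
  rintro c ⟨ξ, -, -, rfl⟩
  exact integral_nonneg fun p => by positivity

/-- Key upper bound for the transport cost between uniform measures. -/
lemma transportCost_le_bound {n : ℕ} {P Q : Set (Euc n)}
    (hPm : MeasurableSet P) (hQm : MeasurableSet Q)
    (hP0 : volume P ≠ 0) (hPt : volume P ≠ ⊤)
    (hQ0 : volume Q ≠ 0) (hQt : volume Q ≠ ⊤)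
    {R : ℝ} (hPR : P ⊆ closedBall 0 R) (hQR : Q ⊆ closedBall 0 R) :
    transportCost (unifMeasure P) (unifMeasure Q) ≤
      (2 * R) ^ 2 * (1 - volume (P ∩ Q) / max (volume P) (volume Q)).toReal := by
  classical
  set μ := unifMeasure P with hμdef
  set ν := unifMeasure Q with hνdef
  have hμP : ∀ s : Set (Euc n), MeasurableSet s → μ s = (volume P)⁻¹ * volume (s ∩ P) := by
    intro s hs
    simp [hμdef, unifMeasure, Measure.smul_apply, Measure.restrict_apply hs, smul_eq_mul]
  have hνQ : ∀ s : Set (Euc n), MeasurableSet s → ν s = (volume Q)⁻¹ * volume (s ∩ Q) := by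
    intro s hs
    simp [hνdef, unifMeasure, Measure.smul_apply, Measure.restrict_apply hs, smul_eq_mul]
  haveI : IsProbabilityMeasure μ := by
    constructor
    rw [hμP _ MeasurableSet.univ, Set.univ_inter, ENNReal.inv_mul_cancel hP0 hPt]
  haveI : IsProbabilityMeasure ν := by
    constructor
    rw [hνQ _ MeasurableSet.univ, Set.univ_inter, ENNReal.inv_mul_cancel hQ0 hQt]
  set b := max (volume P) (volume Q) with hbdef
  have hb0 : b ≠ 0 := fun hb => hP0 (le_antisymm (hb ▸ le_max_left _ _) bot_le)
  have hbt : b ≠ ⊤ := by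
    rw [hbdef]; exact (max_lt hPt.lt_top hQt.lt_top).ne
  set γ : Measure (Euc n) := b⁻¹ • volume.restrict (P ∩ Q) with hγdef
  have hγ_apply : ∀ s : Set (Euc n), MeasurableSet s → γ s = b⁻¹ * volume (s ∩ (P ∩ Q)) := by
    intro s hs
    simp [hγdef, Measure.smul_apply, Measure.restrict_apply hs, smul_eq_mul]
  have hγμ : γ ≤ μ := by
    rw [Measure.le_iff]
    intro s hs
    rw [hγ_apply s hs, hμP s hs]
    exact mul_le_mul' (ENNReal.inv_le_inv.2 (le_max_left _ _))
      (measure_mono (Set.inter_subset_inter_right _ Set.inter_subset_left))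
  have hγν : γ ≤ ν := by
    rw [Measure.le_iff]
    intro s hs
    rw [hγ_apply s hs, hνQ s hs]
    exact mul_le_mul' (ENNReal.inv_le_inv.2 (le_max_right _ _))
      (measure_mono (Set.inter_subset_inter_right _ Set.inter_subset_right))
  haveI : IsFiniteMeasure γ := by
    constructor
    exact lt_of_le_of_lt (Measure.le_iff'.1 hγμ Set.univ) (measure_lt_top μ _)
  set ρ₁ : Measure (Euc n) := μ - γ with hρ₁def
  set ρ₂ : Measure (Euc n) := ν - γ with hρ₂def
  have hρ₁μ : ρ₁ ≤ μ := Measure.sub_le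
  have hρ₂ν : ρ₂ ≤ ν := Measure.sub_le
  haveI : IsFiniteMeasure ρ₁ := ⟨lt_of_le_of_lt (Measure.le_iff'.1 hρ₁μ _) (measure_lt_top μ _)⟩
  haveI : IsFiniteMeasure ρ₂ := ⟨lt_of_le_of_lt (Measure.le_iff'.1 hρ₂ν _) (measure_lt_top ν _)⟩
  have hγuniv : γ Set.univ = volume (P ∩ Q) / b := by
    rw [hγ_apply _ MeasurableSet.univ, Set.univ_inter, ENNReal.div_eq_inv_mul]
  set ε : ℝ≥0∞ := 1 - volume (P ∩ Q) / b with hεdef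
  have hεt : ε ≠ ⊤ := (tsub_le_self.trans_lt ENNReal.one_lt_top).ne
  have hρ₁univ : ρ₁ Set.univ = ε := by
    rw [hρ₁def, Measure.sub_apply MeasurableSet.univ hγμ, measure_univ, hγuniv]
  have hρ₂univ : ρ₂ Set.univ = ε := by
    rw [hρ₂def, Measure.sub_apply MeasurableSet.univ hγν, measure_univ, hγuniv]
  have hdiag : Measurable fun x : Euc n => (x, x) := measurable_id.prodMk measurable_id
  have hf_cont : Continuous fun p : Euc n × Euc n => dist p.1 p.2 ^ 2 :=
    (continuous_fst.dist continuous_snd).pow 2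
  -- R is nonnegative
  have hPne : P.Nonempty := by
    rw [Set.nonempty_iff_ne_empty]
    intro hempty
    exact hP0 (by simp [hempty])
  have hR : 0 ≤ R := by
    obtain ⟨x, hx⟩ := hPne
    have := hPR hx
    rw [mem_closedBall, dist_zero_right] at this
    exact le_trans (norm_nonneg x) this
  by_cases hε0 : ε = 0
  · -- degenerate case : μ = γ = ν, use the diagonal coupling
    have hρ₁0 : ρ₁ = 0 := by
      apply Measure.measure_univ_eq_zero.1
      rw [hρ₁univ, hε0]
    have hρ₂0 : ρ₂ = 0 := by
      apply Measure.measure_univ_eq_zero.1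
      rw [hρ₂univ, hε0]
    have hμγ : μ = γ := by
      conv_lhs => rw [← Measure.sub_add_cancel_of_le hγμ]
      rw [← hρ₁def, hρ₁0, zero_add]
    have hνγ : ν = γ := by
      conv_lhs => rw [← Measure.sub_add_cancel_of_le hγν]
      rw [← hρ₂def, hρ₂0, zero_add]
    have hle : transportCost μ ν ≤ 0 := by
      apply csInf_le (costSet_bddBelow μ ν)
      refine ⟨Measure.map (fun x => (x, x)) μ, ?_, ?_, ?_⟩
      · rw [Measure.map_map measurable_fst hdiag]
        exact Measure.map_id
      · rw [Measure.map_map measurable_snd hdiag, hνγ, ← hμγ]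
        exact Measure.map_id
      · rw [integral_map hdiag.aemeasurable hf_cont.aestronglyMeasurable]
        simp
    calc transportCost μ ν ≤ 0 := hle
      _ ≤ (2 * R) ^ 2 * ε.toReal := by positivity
  · -- main case
    set σ : Measure (Euc n × Euc n) := ε⁻¹ • (ρ₁.prod ρ₂) with hσdef
    set ξ : Measure (Euc n × Euc n) := Measure.map (fun x => (x, x)) γ + σ with hξdef
    have hcancel : ε⁻¹ * ε = 1 := ENNReal.inv_mul_cancel hε0 hεt
    have hm1f : Measure.map Prod.fst (Measure.map (fun x : Euc n => (x, x)) γ) = γ := by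
      rw [Measure.map_map measurable_fst hdiag]
      exact Measure.map_id
    have hm1s : Measure.map Prod.snd (Measure.map (fun x : Euc n => (x, x)) γ) = γ := by
      rw [Measure.map_map measurable_snd hdiag]
      exact Measure.map_id
    have hm2f : Measure.map Prod.fst σ = ρ₁ := by
      rw [hσdef, Measure.map_smul, Measure.map_fst_prod, hρ₂univ, smul_smul, hcancel, one_smul]
    have hm2s : Measure.map Prod.snd σ = ρ₂ := by
      rw [hσdef, Measure.map_smul, Measure.map_snd_prod, hρ₁univ, smul_smul, hcancel, one_smul]
    have hfst : ξ.map Prod.fst = μ := by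
      rw [hξdef, Measure.map_add _ _ measurable_fst, hm1f, hm2f, add_comm]
      exact Measure.sub_add_cancel_of_le hγμ
    have hsnd : ξ.map Prod.snd = ν := by
      rw [hξdef, Measure.map_add _ _ measurable_snd, hm1s, hm2s, add_comm]
      exact Measure.sub_add_cancel_of_le hγν
    have hσuniv : σ Set.univ = ε := by
      rw [hσdef, Measure.smul_apply, smul_eq_mul, ← Set.univ_prod_univ, Measure.prod_prod,
        hρ₁univ, hρ₂univ, ← mul_assoc, hcancel, one_mul]
    haveI : IsFiniteMeasure σ := ⟨by rw [hσuniv]; exact hεt.lt_top⟩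
    -- a.e. bound on the distance
    have hμPc : μ (closedBall (0 : Euc n) R)ᶜ = 0 := by
      rw [hμP _ (measurableSet_closedBall).compl]
      have : (closedBall (0 : Euc n) R)ᶜ ∩ P = ∅ := by
        rw [Set.eq_empty_iff_forall_notMem]
        rintro x ⟨hx1, hx2⟩
        exact hx1 (hPR hx2)
      rw [this, measure_empty, mul_zero]
    have hνQc : ν (closedBall (0 : Euc n) R)ᶜ = 0 := by
      rw [hνQ _ (measurableSet_closedBall).compl]
      have : (closedBall (0 : Euc n) R)ᶜ ∩ Q = ∅ := by
        rw [Set.eq_empty_iff_forall_notMem]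
        rintro x ⟨hx1, hx2⟩
        exact hx1 (hQR hx2)
      rw [this, measure_empty, mul_zero]
    have hρ₁c : ρ₁ (closedBall (0 : Euc n) R)ᶜ = 0 :=
      le_antisymm (le_trans (Measure.le_iff'.1 hρ₁μ _) hμPc.le) bot_le
    have hρ₂c : ρ₂ (closedBall (0 : Euc n) R)ᶜ = 0 :=
      le_antisymm (le_trans (Measure.le_iff'.1 hρ₂ν _) hνQc.le) bot_le
    have hσball : σ (closedBall (0 : Euc n) R ×ˢ closedBall (0 : Euc n) R)ᶜ = 0 := by
      rw [hσdef, Measure.smul_apply, smul_eq_mul]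
      have hsub : (closedBall (0 : Euc n) R ×ˢ closedBall (0 : Euc n) R)ᶜ ⊆
          ((closedBall (0 : Euc n) R)ᶜ ×ˢ (Set.univ : Set (Euc n))) ∪
          ((Set.univ : Set (Euc n)) ×ˢ (closedBall (0 : Euc n) R)ᶜ) := by
        rintro ⟨p1, p2⟩ hp
        rw [Set.mem_compl_iff, Set.mem_prod] at hp
        push_neg at hp
        by_cases h1 : p1 ∈ closedBall (0 : Euc n) R
        · exact Or.inr ⟨Set.mem_univ _, hp h1⟩
        · exact Or.inl ⟨h1, Set.mem_univ _⟩
      have h0 : (ρ₁.prod ρ₂) (closedBall (0 : Euc n) R ×ˢ closedBall (0 : Euc n) R)ᶜ = 0 := by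
        apply measure_mono_null hsub
        apply measure_union_null
        · rw [Measure.prod_prod, hρ₁c, zero_mul]
        · rw [Measure.prod_prod, hρ₂c, mul_zero]
      rw [h0, mul_zero]
    have hball : ∀ᵐ p ∂σ, dist p.1 p.2 ^ 2 ≤ (2 * R) ^ 2 := by
      rw [ae_iff]
      apply measure_mono_null _ hσball
      rintro ⟨p1, p2⟩ hp
      rw [Set.mem_setOf_eq, not_le] at hp
      rw [Set.mem_compl_iff, Set.mem_prod]
      rintro ⟨h1, h2⟩
      rw [mem_closedBall, dist_zero_right] at h1 h2
      have hd : dist p1 p2 ≤ 2 * R := by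
        calc dist p1 p2 ≤ ‖p1‖ + ‖p2‖ := dist_le_norm_add_norm _ _
          _ ≤ R + R := add_le_add h1 h2
          _ = 2 * R := by ring
      have : dist p1 p2 ^ 2 ≤ (2 * R) ^ 2 := by
        apply pow_le_pow_left₀ dist_nonneg hd
      exact absurd this (not_le.2 hp)
    -- integrability
    have hI1 : Integrable (fun p : Euc n × Euc n => dist p.1 p.2 ^ 2)
        (Measure.map (fun x => (x, x)) γ) := by
      rw [integrable_map_measure hf_cont.aestronglyMeasurable hdiag.aemeasurable]
      have : ((fun p : Euc n × Euc n => dist p.1 p.2 ^ 2) ∘ fun x : Euc n => (x, x)) =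
          fun _ => (0 : ℝ) := by
        funext x; simp
      rw [this]
      exact integrable_const 0
    have hI2 : Integrable (fun p : Euc n × Euc n => dist p.1 p.2 ^ 2) σ := by
      apply Integrable.mono' (integrable_const ((2 * R) ^ 2)) hf_cont.aestronglyMeasurable
      filter_upwards [hball] with p hp
      rwa [Real.norm_of_nonneg (by positivity)]
    have hc2 : ∫ p, dist p.1 p.2 ^ 2 ∂σ ≤ (2 * R) ^ 2 * ε.toReal := by
      calc ∫ p, dist p.1 p.2 ^ 2 ∂σ ≤ ∫ _, (2 * R) ^ 2 ∂σ :=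
            integral_mono_ae hI2 (integrable_const _) hball
        _ = (σ Set.univ).toReal * (2 * R) ^ 2 := by rw [integral_const, smul_eq_mul]; rfl
        _ = (2 * R) ^ 2 * ε.toReal := by rw [hσuniv, mul_comm]
    have hc1 : ∫ p, dist p.1 p.2 ^ 2 ∂(Measure.map (fun x => (x, x)) γ) = 0 := by
      rw [integral_map hdiag.aemeasurable hf_cont.aestronglyMeasurable]
      simp
    have hcost : ∫ p, dist p.1 p.2 ^ 2 ∂ξ ≤ (2 * R) ^ 2 * ε.toReal := by
      rw [hξdef, integral_add_measure hI1 hI2, hc1, zero_add]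
      exact hc2
    exact le_trans (csInf_le (costSet_bddBelow μ ν) ⟨ξ, hfst, hsnd, rfl⟩) hcost

/-- A convex set close to `Q` in symmetric-difference volume stays in a ball. -/
lemma subset_ball_of_small {n : ℕ} {P Q : Set (Euc n)} (hPc : Convex ℝ P)
    {c : Euc n} {r R₀ : ℝ} (hr : 0 < r) (hball : ball c r ⊆ Q)
    (hQR : Q ⊆ closedBall 0 R₀)
    (hsmall : volume (symmDiff P Q) <
      ENNReal.ofReal ((1 / 2 : ℝ) ^ n) * (volume (ball c r) / 2)) :
    P ⊆ closedBall 0 (3 * R₀ + 1) := by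
  intro x hx
  by_contra hxR
  have hx' : 3 * R₀ + 1 < ‖x‖ := by
    rw [mem_closedBall, dist_zero_right, not_le] at hxR
    exact hxR
  set K := P ∩ ball c r with hKdef
  have hδball : ENNReal.ofReal ((1 / 2 : ℝ) ^ n) * (volume (ball c r) / 2) ≤
      volume (ball c r) / 2 := by
    apply mul_le_of_le_one_left zero_le
    rw [ENNReal.ofReal_le_one]
    exact pow_le_one₀ (by norm_num) (by norm_num)
  have hKvol : volume (ball c r) / 2 ≤ volume K := by
    have hsub : ball c r ⊆ K ∪ (Q \ P) := by
      intro y hy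
      by_cases hyP : y ∈ P
      · exact Or.inl ⟨hyP, hy⟩
      · exact Or.inr ⟨hball hy, hyP⟩
    have hQP : volume (Q \ P) < volume (ball c r) / 2 := by
      refine lt_of_le_of_lt (measure_mono ?_) (lt_of_lt_of_le hsmall hδball)
      intro y hy
      rw [Set.mem_symmDiff]
      exact Or.inr ⟨hy.1, hy.2⟩
    have h1 : volume (ball c r) ≤ volume K + volume (Q \ P) :=
      le_trans (measure_mono hsub) (measure_union_le _ _)
    have h2 : volume (ball c r) < volume K + volume (ball c r) / 2 :=
      lt_of_le_of_lt h1 (ENNReal.add_lt_add_left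
        (lt_of_le_of_lt (measure_mono Set.inter_subset_right) measure_ball_lt_top).ne hQP)
    have h3 : volume (ball c r) / 2 + volume (ball c r) / 2 <
        volume K + volume (ball c r) / 2 := by
      rwa [ENNReal.add_halves]
    have hhalf : volume (ball c r) / 2 ≠ ⊤ :=
      (ENNReal.div_lt_top measure_ball_lt_top.ne (by norm_num)).ne
    exact le_of_lt ((ENNReal.add_lt_add_iff_right hhalf).1 h3)
  set M := (fun y => (1 / 2 : ℝ) • (x + y)) '' K with hMdef
  have hMP : M ⊆ P := by
    rintro z ⟨y, hy, rfl⟩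
    have := hPc hx hy.1 (le_of_lt one_half_pos) (le_of_lt one_half_pos) (by norm_num)
    simpa [smul_add] using this
  have hMQ : ∀ z ∈ M, z ∉ Q := by
    rintro z ⟨y, hy, rfl⟩ hzQ
    have hyR : ‖y‖ ≤ R₀ := by
      have := hQR (hball hy.2)
      rwa [mem_closedBall, dist_zero_right] at this
    have hzR : ‖(1 / 2 : ℝ) • (x + y)‖ ≤ R₀ := by
      have := hQR hzQ
      rwa [mem_closedBall, dist_zero_right] at this
    have hxy : ‖x‖ - ‖y‖ ≤ ‖x + y‖ := by
      have := norm_add_le (x + y) (-y)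
      simp only [add_neg_cancel_right, norm_neg] at this
      linarith
    rw [norm_smul, Real.norm_eq_abs] at hzR
    have : (1 / 2 : ℝ) * ‖x + y‖ ≤ R₀ := by
      rwa [abs_of_pos one_half_pos] at hzR
    nlinarith
  have hMPQ : M ⊆ P \ Q := fun z hz => ⟨hMP hz, hMQ z hz⟩
  have hMvol : volume M = ENNReal.ofReal ((1 / 2 : ℝ) ^ n) * volume K := by
    have hMeq : M = (1 / 2 : ℝ) • (x +ᵥ K) := by
      rw [← Set.image_vadd, ← Set.image_smul, ← Set.image_comp]
      rfl
    rw [hMeq, Measure.addHaar_smul, measure_vadd]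
    congr 2
    rw [finrank_euclideanSpace_fin, abs_of_pos (by positivity)]
  have hfinal : ENNReal.ofReal ((1 / 2 : ℝ) ^ n) * (volume (ball c r) / 2) ≤
      volume (P \ Q) := by
    calc ENNReal.ofReal ((1 / 2 : ℝ) ^ n) * (volume (ball c r) / 2)
        ≤ ENNReal.ofReal ((1 / 2 : ℝ) ^ n) * volume K := mul_le_mul_right hKvol _
      _ = volume M := hMvol.symm
      _ ≤ volume (P \ Q) := measure_mono hMPQ
  have hPQsymm : volume (P \ Q) ≤ volume (symmDiff P Q) := by
    apply measure_mono
    intro y hy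
    rw [Set.mem_symmDiff]
    exact Or.inl ⟨hy.1, hy.2⟩
  exact absurd (lt_of_le_of_lt (hfinal.trans hPQsymm) hsmall) (lt_irrefl _)

/-- If convex bodies `P i` converge to the convex body `Q` in the
symmetric-difference volume distance `d^V`, then the normalized uniform
measures converge in the `L²`-Wasserstein distance. -/
theorem stmt2 (n : ℕ) (P : ℕ → Set (Euc n)) (Q : Set (Euc n))
    (hP : ∀ i, IsConvexBody (P i)) (hQ : IsConvexBody Q)
    (h : Tendsto (fun i => (volume (symmDiff (P i) Q)).toReal) atTop (𝓝 0)) :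
    Tendsto (fun i => W2 (unifMeasure (P i)) (unifMeasure Q)) atTop (𝓝 0) := by
  obtain ⟨hQconv, hQcomp, hQint⟩ := hQ
  have hQm : MeasurableSet Q := hQcomp.isClosed.measurableSet
  have hPm : ∀ i, MeasurableSet (P i) := fun i => (hP i).2.1.isClosed.measurableSet
  have hQt : volume Q ≠ ⊤ := hQcomp.measure_lt_top.ne
  have hPt : ∀ i, volume (P i) ≠ ⊤ := fun i => (hP i).2.1.measure_lt_top.ne
  -- ball inside Q
  obtain ⟨cen, hcen⟩ := hQint
  obtain ⟨r, hr, hballsub⟩ := Metric.isOpen_iff.1 isOpen_interior cen hcen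
  have hballQ : ball cen r ⊆ Q := hballsub.trans interior_subset
  have hQ0 : volume Q ≠ 0 := by
    intro h0
    have : volume (ball cen r) ≤ volume Q := measure_mono hballQ
    rw [h0] at this
    exact (measure_ball_pos volume cen hr).ne' (le_antisymm this bot_le)
  have hP0 : ∀ i, volume (P i) ≠ 0 := by
    intro i
    obtain ⟨ci, hci⟩ := (hP i).2.2
    obtain ⟨ri, hri, hbi⟩ := Metric.isOpen_iff.1 isOpen_interior ci hci
    intro h0
    have : volume (ball ci ri) ≤ volume (P i) := measure_mono (hbi.trans interior_subset)
    rw [h0] at this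
    exact (measure_ball_pos volume ci hri).ne' (le_antisymm this bot_le)
  -- bound Q
  obtain ⟨R₀', hR₀'⟩ := hQcomp.isBounded.subset_closedBall (0 : Euc n)
  set R₀ := max R₀' 0 with hR₀def
  have hQR₀ : Q ⊆ closedBall 0 R₀ :=
    hR₀'.trans (closedBall_subset_closedBall (le_max_left _ _))
  have hR₀0 : 0 ≤ R₀ := le_max_right _ _
  set R := 3 * R₀ + 1 with hRdef
  have hQR : Q ⊆ closedBall 0 R :=
    hQR₀.trans (closedBall_subset_closedBall (by linarith))
  -- threshold
  set δ : ℝ≥0∞ := ENNReal.ofReal ((1 / 2 : ℝ) ^ n) * (volume (ball cen r) / 2) with hδdef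
  have hδ0 : 0 < δ := by
    apply ENNReal.mul_pos
    · exact (ENNReal.ofReal_pos.2 (by positivity)).ne'
    · exact (ENNReal.div_pos (measure_ball_pos volume cen hr).ne' ENNReal.ofNat_ne_top).ne'
  have hδt : δ ≠ ⊤ := by
    apply ENNReal.mul_ne_top ENNReal.ofReal_ne_top
    exact (ENNReal.div_lt_top measure_ball_lt_top.ne (by norm_num)).ne
  have hdfin : ∀ i, volume (symmDiff (P i) Q) ≠ ⊤ := by
    intro i
    refine (lt_of_le_of_lt (measure_mono ?_) ((hP i).2.1.union hQcomp).measure_lt_top).ne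
    intro y hy
    rcases Set.mem_symmDiff.1 hy with ⟨h1, -⟩ | ⟨h1, -⟩
    · exact Or.inl h1
    · exact Or.inr h1
  have hδtr : 0 < δ.toReal := ENNReal.toReal_pos hδ0.ne' hδt
  have hev : ∀ᶠ i in atTop, volume (symmDiff (P i) Q) < δ := by
    filter_upwards [h.eventually (gt_mem_nhds hδtr)] with i hi
    exact (ENNReal.toReal_lt_toReal (hdfin i) hδt).1 hi
  have hevball : ∀ᶠ i in atTop, P i ⊆ closedBall 0 R := by
    filter_upwards [hev] with i hi
    exact subset_ball_of_small (hP i).1 hr hballQ hQR₀ hi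
  -- the epsilon sequence
  set e : ℕ → ℝ := fun i =>
    (1 - volume (P i ∩ Q) / max (volume (P i)) (volume Q)).toReal with hedef
  -- show e → 0
  set vQ := (volume Q).toReal with hvQdef
  have hvQ0 : 0 < vQ := ENNReal.toReal_pos hQ0 hQt
  set dR : ℕ → ℝ := fun i => (volume (symmDiff (P i) Q)).toReal with hdRdef
  have haQ : ∀ i, volume (P i ∩ Q) ≤ volume Q := fun i => measure_mono Set.inter_subset_right
  have hafin : ∀ i, volume (P i ∩ Q) ≠ ⊤ := fun i => (lt_of_le_of_lt (haQ i) hQt.lt_top).ne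
  have hbfin : ∀ i, max (volume (P i)) (volume Q) ≠ ⊤ :=
    fun i => (max_lt (hPt i).lt_top hQt.lt_top).ne
  have hb0 : ∀ i, max (volume (P i)) (volume Q) ≠ 0 :=
    fun i hb => hQ0 (le_antisymm (hb ▸ le_max_right _ _) bot_le)
  have hQa : ∀ i, volume Q ≤ volume (P i ∩ Q) + volume (symmDiff (P i) Q) := by
    intro i
    have hsub : Q ⊆ (P i ∩ Q) ∪ symmDiff (P i) Q := by
      intro y hy
      by_cases hyP : y ∈ P i
      · exact Or.inl ⟨hyP, hy⟩
      · exact Or.inr (Set.mem_symmDiff.2 (Or.inr ⟨hy, hyP⟩))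
    exact le_trans (measure_mono hsub) (measure_union_le _ _)
  have hbU : ∀ i, max (volume (P i)) (volume Q) ≤ volume Q + volume (symmDiff (P i) Q) := by
    intro i
    apply max_le _ le_self_add
    have hsub : P i ⊆ Q ∪ symmDiff (P i) Q := by
      intro y hy
      by_cases hyQ : y ∈ Q
      · exact Or.inl hyQ
      · exact Or.inr (Set.mem_symmDiff.2 (Or.inl ⟨hy, hyQ⟩))
    exact le_trans (measure_mono hsub) (measure_union_le _ _)
  -- real-valued limits
  have haR : Tendsto (fun i => (volume (P i ∩ Q)).toReal) atTop (𝓝 vQ) := by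
    have hlow : ∀ i, vQ - dR i ≤ (volume (P i ∩ Q)).toReal := by
      intro i
      have := ENNReal.toReal_mono
        (by exact ENNReal.add_ne_top.2 ⟨hafin i, hdfin i⟩) (hQa i)
      rw [ENNReal.toReal_add (hafin i) (hdfin i)] at this
      linarith [this]
    have hup : ∀ i, (volume (P i ∩ Q)).toReal ≤ vQ :=
      fun i => ENNReal.toReal_mono hQt (haQ i)
    refine tendsto_of_tendsto_of_tendsto_of_le_of_le ?_ tendsto_const_nhds hlow hup
    have := tendsto_const_nhds (x := vQ) (f := atTop (α := ℕ)) |>.sub h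
    simpa using this
  have hbR : Tendsto (fun i => (max (volume (P i)) (volume Q)).toReal) atTop (𝓝 vQ) := by
    have hlow : ∀ i, vQ ≤ (max (volume (P i)) (volume Q)).toReal :=
      fun i => ENNReal.toReal_mono (hbfin i) (le_max_right _ _)
    have hup : ∀ i, (max (volume (P i)) (volume Q)).toReal ≤ vQ + dR i := by
      intro i
      have := ENNReal.toReal_mono
        (by exact ENNReal.add_ne_top.2 ⟨hQt, hdfin i⟩) (hbU i)
      rw [ENNReal.toReal_add hQt (hdfin i)] at this
      linarith [this]
    refine tendsto_of_tendsto_of_tendsto_of_le_of_le tendsto_const_nhds ?_ hlow hup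
    have := tendsto_const_nhds (x := vQ) (f := atTop (α := ℕ)) |>.add h
    simpa using this
  have hdiv : Tendsto (fun i =>
      (volume (P i ∩ Q)).toReal / (max (volume (P i)) (volume Q)).toReal) atTop (𝓝 1) := by
    have := haR.div hbR hvQ0.ne'
    rwa [div_self hvQ0.ne'] at this
  have he0 : Tendsto e atTop (𝓝 0) := by
    have heq : ∀ i, e i = 1 -
        (volume (P i ∩ Q)).toReal / (max (volume (P i)) (volume Q)).toReal := by
      intro i
      have hle1 : volume (P i ∩ Q) / max (volume (P i)) (volume Q) ≤ 1 := by
        rw [ENNReal.div_le_iff (hb0 i) (hbfin i), one_mul]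
        exact (haQ i).trans (le_max_right _ _)
      rw [hedef]
      simp only
      rw [ENNReal.toReal_sub_of_le hle1 ENNReal.one_ne_top, ENNReal.toReal_one,
        ENNReal.toReal_div]
    have : Tendsto (fun i => 1 -
        (volume (P i ∩ Q)).toReal / (max (volume (P i)) (volume Q)).toReal) atTop (𝓝 0) := by
      have := tendsto_const_nhds (x := (1 : ℝ)) (f := atTop (α := ℕ)) |>.sub hdiv
      simpa using this
    simpa [funext heq] using this
  -- squeeze the transport cost
  have htc : Tendsto (fun i => transportCost (unifMeasure (P i)) (unifMeasure Q))
      atTop (𝓝 0) := by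
    apply squeeze_zero' (g := fun i => (2 * R) ^ 2 * e i)
    · exact Eventually.of_forall fun i => transportCost_nonneg _ _
    · filter_upwards [hevball] with i hi
      exact transportCost_le_bound (hPm i) hQm (hP0 i) (hPt i) hQ0 hQt hi hQR
    · have := he0.const_mul ((2 * R) ^ 2)
      simpa using this
  have := (Real.continuous_sqrt.tendsto 0).comp htc
  simp only [Function.comp_def, Real.sqrt_zero] at this
  exact this
end

section
/- If a sequence {P_i} of convex bodies in ℝⁿ satisfies W₂(m_{P_i}, m_Q) → 0 for a convex body Q, then vol(P_i △ Q) → 0, i.e., P_i → Q in the symmetric-difference volume distance. -/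
open MeasureTheory Filter Topology Metric
open scoped RealInnerProductSpace ENNReal

open Set

namespace CB

variable {n : ℕ} {C P Q : Set (Euc n)}

lemma vol_pos (h : IsConvexBody C) : 0 < volume C := by
  obtain ⟨x, hx⟩ := h.2.2
  obtain ⟨ε, hε, hball⟩ := Metric.isOpen_iff.1 isOpen_interior x hx
  calc (0:ℝ≥0∞) < volume (ball x ε) := measure_ball_pos _ _ hε
    _ ≤ volume C := measure_mono (hball.trans interior_subset)

lemma vol_ne_top (h : IsConvexBody C) : volume C ≠ ∞ := h.2.1.measure_lt_top.ne

lemma isProb (h : IsConvexBody C) : IsProbabilityMeasure (unifMeasure C) := by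
  constructor
  rw [unifMeasure, Measure.smul_apply, Measure.restrict_apply MeasurableSet.univ,
    Set.univ_inter, smul_eq_mul, ENNReal.inv_mul_cancel (vol_pos h).ne' (vol_ne_top h)]

lemma unif_apply (S : Set (Euc n)) (hS : MeasurableSet S) :
    unifMeasure C S = (volume C)⁻¹ * volume (S ∩ C) := by
  rw [unifMeasure, Measure.smul_apply, Measure.restrict_apply hS, smul_eq_mul]

lemma unif_compl (h : IsConvexBody C) : unifMeasure C Cᶜ = 0 := by
  rw [unif_apply _ h.2.1.isClosed.measurableSet.compl, compl_inter_self, measure_empty, mul_zero]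


lemma separation (hconv : Convex ℝ P) (hcl : IsClosed P) (hne : P.Nonempty)
    {x : Euc n} (hx : x ∉ P) :
    ∃ u : Euc n, ‖u‖ = 1 ∧ ∀ p ∈ P, ⟪u, p⟫ ≤ ⟪u, x⟫ := by
  obtain ⟨f, t, hft, htx⟩ := geometric_hahn_banach_closed_point hconv hcl hx
  set v := (InnerProductSpace.toDual ℝ (Euc n)).symm f with hv
  have hvapp : ∀ y : Euc n, ⟪v, y⟫ = f y := fun y => InnerProductSpace.toDual_symm_apply
  obtain ⟨p₀, hp₀⟩ := hne
  have hvne : v ≠ 0 := by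
    intro h0
    have := hvapp p₀
    rw [h0, inner_zero_left] at this
    have h1 := hft p₀ hp₀
    have := hvapp x
    rw [h0, inner_zero_left] at this
    linarith
  refine ⟨‖v‖⁻¹ • v, ?_, fun p hp => ?_⟩
  · rw [norm_smul, norm_inv, norm_norm, inv_mul_cancel₀ (norm_ne_zero_iff.2 hvne)]
  · rw [real_inner_smul_left, real_inner_smul_left, hvapp, hvapp]
    have : f p ≤ f x := le_of_lt (lt_trans (hft p hp) htx)
    have hpos : 0 ≤ ‖v‖⁻¹ := by positivity
    exact mul_le_mul_of_nonneg_left this hpos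


section coupling
variable {ξ : Measure (Euc n × Euc n)}
  (h1 : ξ.map Prod.fst = unifMeasure P) (h2 : ξ.map Prod.snd = unifMeasure Q)

include h1 in
lemma marg_fst {A : Set (Euc n)} (hA : MeasurableSet A) :
    ξ (A ×ˢ univ) = unifMeasure P A := by
  rw [Set.prod_univ, ← Measure.map_apply measurable_fst hA, h1]

include h2 in
lemma marg_snd {A : Set (Euc n)} (hA : MeasurableSet A) :
    ξ (univ ×ˢ A) = unifMeasure Q A := by
  rw [Set.univ_prod, ← Measure.map_apply measurable_snd hA, h2]

include h1 in
lemma coupling_prob (hP : IsConvexBody P) : IsProbabilityMeasure ξ := by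
  constructor
  have := (isProb hP).measure_univ
  rw [← h1, Measure.map_apply measurable_fst MeasurableSet.univ, Set.preimage_univ] at this
  exact this

include h1 h2 in
lemma coupling_null (hP : IsConvexBody P) (hQ : IsConvexBody Q) : ξ ((P ×ˢ Q)ᶜ) = 0 := by
  rw [Set.compl_prod_eq_union]
  refine le_antisymm (le_trans (measure_union_le _ _) ?_) (zero_le)
  rw [marg_fst h1 hP.2.1.isClosed.measurableSet.compl,
    marg_snd h2 hQ.2.1.isClosed.measurableSet.compl, unif_compl hP, unif_compl hQ, add_zero]

include h1 h2 in
lemma coupling_integrable (hP : IsConvexBody P) (hQ : IsConvexBody Q) :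
    Integrable (fun p : Euc n × Euc n => dist p.1 p.2 ^ 2) ξ := by
  have hprob := coupling_prob h1 hP
  obtain ⟨R, hR⟩ := (hP.2.1.isBounded.union hQ.2.1.isBounded).subset_closedBall 0
  have hae : ∀ᵐ p ∂ξ, p ∈ P ×ˢ Q := by
    rw [ae_iff]
    exact coupling_null h1 h2 hP hQ
  refine Integrable.mono' (integrable_const ((2*R)^2)) ?_ ?_
  · exact ((continuous_fst.dist continuous_snd).pow 2).aestronglyMeasurable
  · filter_upwards [hae] with p hp
    have h1r : dist p.1 0 ≤ R := hR (Or.inl hp.1)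
    have h2r : dist p.2 0 ≤ R := hR (Or.inr hp.2)
    have hd : dist p.1 p.2 ≤ 2 * R := by
      calc dist p.1 p.2 ≤ dist p.1 0 + dist 0 p.2 := dist_triangle _ _ _
        _ ≤ R + R := by rw [dist_comm (0 : Euc n)]; exact add_le_add h1r h2r
        _ = 2 * R := by ring
    have : |dist p.1 p.2 ^ 2| = dist p.1 p.2 ^ 2 := abs_of_nonneg (by positivity)
    rw [Real.norm_eq_abs, this]
    have h2R : (0:ℝ) ≤ 2 * R := le_trans dist_nonneg hd
    exact pow_le_pow_left₀ dist_nonneg hd 2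

include h1 h2 in
lemma coupling_markov (hP : IsConvexBody P) (hQ : IsConvexBody Q)
    {A : Set (Euc n × Euc n)} (hA : MeasurableSet A) {s : ℝ} (hs : 0 ≤ s)
    (hdist : ∀ p ∈ A ∩ P ×ˢ Q, s ≤ dist p.1 p.2) :
    s ^ 2 * (ξ A).toReal ≤ ∫ p, dist p.1 p.2 ^ 2 ∂ξ := by
  have hprob := coupling_prob h1 hP
  have hint := coupling_integrable h1 h2 hP hQ
  have hPQm : MeasurableSet (P ×ˢ Q) :=
    (hP.2.1.isClosed.measurableSet).prod hQ.2.1.isClosed.measurableSet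
  have hAeq : ξ A = ξ (A ∩ P ×ˢ Q) := by
    refine le_antisymm ?_ (measure_mono inter_subset_left)
    calc ξ A ≤ ξ (A ∩ P ×ˢ Q ∪ (P ×ˢ Q)ᶜ) := measure_mono (fun p hp => by
        by_cases hpq : p ∈ P ×ˢ Q
        · exact Or.inl ⟨hp, hpq⟩
        · exact Or.inr hpq)
      _ ≤ ξ (A ∩ P ×ˢ Q) + ξ ((P ×ˢ Q)ᶜ) := measure_union_le _ _
      _ = ξ (A ∩ P ×ˢ Q) := by rw [coupling_null h1 h2 hP hQ, add_zero]
  rw [hAeq]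
  calc s ^ 2 * (ξ (A ∩ P ×ˢ Q)).toReal ≤ ∫ p in A ∩ P ×ˢ Q, dist p.1 p.2 ^ 2 ∂ξ := by
        refine setIntegral_ge_of_const_le_real (hA.inter hPQm) (measure_ne_top _ _) ?_
          hint.integrableOn
        exact fun p hp => pow_le_pow_left₀ hs (hdist p hp) 2
    _ ≤ ∫ p, dist p.1 p.2 ^ 2 ∂ξ :=
        setIntegral_le_integral hint (ae_of_all _ fun p => by positivity)

include h1 h2 in
/-- Lemma C: deep points of `Q` lie in `P` when the cost is small. -/
lemma deep_mem (hP : IsConvexBody P) (hQ : IsConvexBody Q)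
    {x : Euc n} {δ : ℝ} (hδ : 0 < δ) (hxQ : closedBall x δ ⊆ Q)
    (hcost : ∫ p, dist p.1 p.2 ^ 2 ∂ξ
      < (δ / 2) ^ 2 * (volume (ball (0 : Euc n) (δ / 4))).toReal / (volume Q).toReal) :
    x ∈ P := by
  by_contra hx
  have hPne : P.Nonempty := hP.2.2.mono interior_subset |>.mono (le_refl _) |> fun h => h
  obtain ⟨u, hu, hsep⟩ := separation hP.1 hP.2.1.isClosed hPne hx
  set c := x + (3 * δ / 4) • u with hc
  set S := ball c (δ / 4) with hS
  have hSQ : S ⊆ Q := by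
    intro y hy
    apply hxQ
    rw [mem_closedBall]
    have h1' : dist y c < δ / 4 := mem_ball.1 hy
    have h2' : dist c x = 3 * δ / 4 := by
      rw [hc, dist_eq_norm, add_sub_cancel_left, norm_smul, hu, mul_one,
        Real.norm_eq_abs, abs_of_nonneg (by linarith)]
    calc dist y x ≤ dist y c + dist c x := dist_triangle _ _ _
      _ ≤ δ := by rw [h2']; linarith
  have hfar : ∀ p ∈ P, ∀ y ∈ S, δ / 2 ≤ dist p y := by
    intro p hp y hy
    have hyc : ‖y - c‖ < δ / 4 := by rw [← dist_eq_norm]; exact hy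
    have hinner : δ / 2 ≤ ⟪u, y - p⟫ := by
      have e1 : ⟪u, y - p⟫ = ⟪u, y - x⟫ + (⟪u, x⟫ - ⟪u, p⟫) := by
        rw [inner_sub_right, inner_sub_right]; ring
      have e2 : ⟪u, y - x⟫ = 3 * δ / 4 + ⟪u, y - c⟫ := by
        have : y - x = (3 * δ / 4) • u + (y - c) := by rw [hc]; abel
        rw [this, inner_add_right, real_inner_smul_right, real_inner_self_eq_norm_sq, hu]
        ring
      have e3 : -(δ/4) ≤ ⟪u, y - c⟫ := by
        have := abs_real_inner_le_norm u (y - c)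
        rw [hu, one_mul] at this
        have := abs_le.1 this
        linarith [this.1]
      have e4 : 0 ≤ ⟪u, x⟫ - ⟪u, p⟫ := sub_nonneg.2 (hsep p hp)
      linarith
    calc δ / 2 ≤ ⟪u, y - p⟫ := hinner
      _ ≤ ‖u‖ * ‖y - p‖ := real_inner_le_norm _ _
      _ = dist p y := by rw [hu, one_mul, ← dist_eq_norm, dist_comm]
  set A := (univ : Set (Euc n)) ×ˢ S with hA
  have hmarkov := coupling_markov h1 h2 hP hQ
    (MeasurableSet.univ.prod measurableSet_ball) (by positivity : (0:ℝ) ≤ δ / 2)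
    (fun p hp => hfar p.1 hp.2.1 p.2 hp.1.2)
  have hξA : ξ A = (volume Q)⁻¹ * volume (ball (0 : Euc n) (δ / 4)) := by
    rw [hA, marg_snd h2 measurableSet_ball, unif_apply _ measurableSet_ball,
      inter_eq_self_of_subset_left hSQ, Measure.addHaar_ball_center]
  have hvb : volume (ball (0 : Euc n) (δ / 4)) ≠ ∞ := measure_ball_lt_top.ne
  have htr : (ξ A).toReal
      = (volume (ball (0 : Euc n) (δ / 4))).toReal / (volume Q).toReal := by
    rw [hξA, ENNReal.toReal_mul, ENNReal.toReal_inv]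
    ring
  rw [htr] at hmarkov
  rw [mul_div_assoc] at hcost
  linarith
end coupling

/-- Lemma A: the part of `P` at distance `> r` from `Q` has small volume. -/
lemma far_bound {ξ : Measure (Euc n × Euc n)}
    (h1 : ξ.map Prod.fst = unifMeasure P) (h2 : ξ.map Prod.snd = unifMeasure Q)
    (hP : IsConvexBody P) (hQ : IsConvexBody Q) {r : ℝ} (hr : 0 < r) :
    (volume (P \ cthickening r Q)).toReal
      ≤ (volume P).toReal * (∫ p, dist p.1 p.2 ^ 2 ∂ξ) / r ^ 2 := by
  set T := cthickening r Q with hT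
  have hTm : MeasurableSet T := isClosed_cthickening.measurableSet
  have hdist : ∀ p ∈ (Tᶜ ×ˢ (univ : Set (Euc n))) ∩ P ×ˢ Q, r ≤ dist p.1 p.2 := by
    rintro p ⟨⟨hp1, -⟩, -, hp2⟩
    by_contra hlt
    exact hp1 (mem_cthickening_of_dist_le p.1 p.2 r Q hp2 (not_lt.1 (fun hgt => hlt hgt.le)))
  have hmarkov := coupling_markov h1 h2 hP hQ (hTm.compl.prod MeasurableSet.univ) hr.le hdist
  have hξ : ξ (Tᶜ ×ˢ univ) = (volume P)⁻¹ * volume (Tᶜ ∩ P) :=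
    (marg_fst h1 hTm.compl).trans (unif_apply _ hTm.compl)
  have hdiff : P \ T = Tᶜ ∩ P := by ext y; simp [mem_diff, and_comm]
  have hfin : volume (Tᶜ ∩ P) ≠ ∞ :=
    ((measure_mono inter_subset_right).trans_lt (lt_top_iff_ne_top.2 (vol_ne_top hP))).ne
  have htoReal : (ξ (Tᶜ ×ˢ univ)).toReal = (volume (Tᶜ ∩ P)).toReal / (volume P).toReal := by
    rw [hξ, ENNReal.toReal_mul, ENNReal.toReal_inv]; ring
  rw [hdiff]
  rw [htoReal] at hmarkov
  have hVP : 0 < (volume P).toReal :=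
    ENNReal.toReal_pos (vol_pos hP).ne' (vol_ne_top hP)
  rw [le_div_iff₀ (by positivity : (0:ℝ) < r ^ 2)]
  have expand : r ^ 2 * ((volume (Tᶜ ∩ P)).toReal / (volume P).toReal) * (volume P).toReal
      = (volume (Tᶜ ∩ P)).toReal * r ^ 2 := by field_simp
  nlinarith [mul_le_mul_of_nonneg_right hmarkov hVP.le]

/-- The inner homothety of a convex body. -/
lemma homothety_subset (hQ : IsConvexBody Q) {c0 : Euc n} (hc0 : c0 ∈ Q)
    {lam : ℝ} (h0 : 0 ≤ lam) (h1 : lam ≤ 1) :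
    AffineMap.homothety c0 lam '' Q ⊆ Q := by
  rintro x ⟨q, hq, rfl⟩
  have : AffineMap.homothety c0 lam q = lam • q + (1 - lam) • c0 := by
    rw [AffineMap.homothety_apply]
    simp only [smul_sub, vsub_eq_sub, vadd_eq_add, sub_smul, one_smul]
    abel
  rw [this]
  exact hQ.1 hq hc0 h0 (by linarith) (by ring)

lemma homothety_deep (hQ : IsConvexBody Q) {c0 : Euc n} {ρ : ℝ} (hρ : 0 < ρ)
    (hball : ball c0 ρ ⊆ Q) {lam : ℝ} (h0 : 0 ≤ lam) (h1 : lam < 1)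
    {x : Euc n} (hx : x ∈ AffineMap.homothety c0 lam '' Q) :
    closedBall x ((1 - lam) * ρ / 2) ⊆ Q := by
  obtain ⟨q, hq, rfl⟩ := hx
  intro y hy
  have hc0Q : c0 ∈ Q := hball (mem_ball_self hρ)
  set x := AffineMap.homothety c0 lam q with hxdef
  have hyx : ‖y - x‖ ≤ (1 - lam) * ρ / 2 := by rw [← dist_eq_norm]; exact hy
  set z := c0 + (1 - lam)⁻¹ • (y - x) with hz
  have hzQ : z ∈ Q := by
    apply hball
    rw [mem_ball, dist_eq_norm, hz, add_sub_cancel_left, norm_smul, norm_inv,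
      Real.norm_eq_abs, abs_of_pos (by linarith : (0:ℝ) < 1 - lam)]
    calc (1 - lam)⁻¹ * ‖y - x‖ ≤ (1 - lam)⁻¹ * ((1 - lam) * ρ / 2) := by
          have : (0:ℝ) < 1 - lam := by linarith
          apply mul_le_mul_of_nonneg_left hyx (by positivity)
      _ = ρ / 2 := by
          have h1l : (1:ℝ) - lam ≠ 0 := by linarith
          field_simp
      _ < ρ := by linarith
  have hkey : y = lam • q + (1 - lam) • z := by
    rw [hz, smul_add, smul_smul, mul_inv_cancel₀ (by linarith : (1:ℝ) - lam ≠ 0), one_smul,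
      hxdef, AffineMap.homothety_apply]
    simp only [vsub_eq_sub, vadd_eq_add, smul_sub, sub_smul, one_smul]
    abel
  rw [hkey]
  exact hQ.1 hq hzQ h0 (by linarith) (by ring)

lemma homothety_volume (Q : Set (Euc n)) (c0 : Euc n) {lam : ℝ} (h0 : 0 ≤ lam) :
    volume (AffineMap.homothety c0 lam '' Q) = ENNReal.ofReal (lam ^ n) * volume Q := by
  rw [Measure.addHaar_image_homothety]
  congr 2
  rw [abs_of_nonneg (pow_nonneg h0 _), finrank_euclideanSpace, Fintype.card_fin]

/-- The volume of `P` is bounded when the cost is small. -/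
lemma volP_le {ξ : Measure (Euc n × Euc n)}
    (h1 : ξ.map Prod.fst = unifMeasure P) (h2 : ξ.map Prod.snd = unifMeasure Q)
    (hP : IsConvexBody P) (hQ : IsConvexBody Q)
    (hcost : ∫ p, dist p.1 p.2 ^ 2 ∂ξ ≤ 1 / 2) :
    (volume P).toReal ≤ 2 * (volume (cthickening 1 Q)).toReal := by
  have hfar := far_bound h1 h2 hP hQ one_pos
  set T := cthickening 1 Q
  have hTm : MeasurableSet T := isClosed_cthickening.measurableSet
  have hsplit : volume (P ∩ T) + volume (P \ T) = volume P := measure_inter_add_diff P hTm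
  have hfin1 : volume (P ∩ T) ≠ ∞ :=
    ((measure_mono inter_subset_left).trans_lt (lt_top_iff_ne_top.2 (vol_ne_top hP))).ne
  have hfin2 : volume (P \ T) ≠ ∞ :=
    ((measure_mono diff_subset).trans_lt (lt_top_iff_ne_top.2 (vol_ne_top hP))).ne
  have hVP : (volume P).toReal = (volume (P ∩ T)).toReal + (volume (P \ T)).toReal := by
    rw [← ENNReal.toReal_add hfin1 hfin2, hsplit]
  have hPT : (volume (P ∩ T)).toReal ≤ (volume T).toReal := by
    apply ENNReal.toReal_mono
    · exact (hQ.2.1.isBounded.cthickening).measure_lt_top.ne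
    · exact measure_mono inter_subset_right
  have hVPpos : 0 ≤ (volume P).toReal := ENNReal.toReal_nonneg
  have hc0 : 0 ≤ ∫ p, dist p.1 p.2 ^ 2 ∂ξ := integral_nonneg (fun p => by positivity)
  have : (volume P).toReal * (∫ p, dist p.1 p.2 ^ 2 ∂ξ) / 1 ^ 2
      ≤ (volume P).toReal * (1/2) := by
    rw [one_pow, div_one]
    exact mul_le_mul_of_nonneg_left hcost hVPpos
  nlinarith [hfar, hPT]

/-- Extract a good coupling from a small `W2`. -/
lemma exists_coupling (hP : IsConvexBody P) (hQ : IsConvexBody Q)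
    {b : ℝ} (hb : 0 < b) (hW : W2 (unifMeasure P) (unifMeasure Q) < b) :
    ∃ ξ : Measure (Euc n × Euc n), ξ.map Prod.fst = unifMeasure P ∧
      ξ.map Prod.snd = unifMeasure Q ∧ ∫ p, dist p.1 p.2 ^ 2 ∂ξ < b ^ 2 := by
  haveI := isProb hP
  haveI := isProb hQ
  set S := { c : ℝ | ∃ ξ : Measure (Euc n × Euc n),
    ξ.map Prod.fst = unifMeasure P ∧ ξ.map Prod.snd = unifMeasure Q ∧
      c = ∫ p, dist p.1 p.2 ^ 2 ∂ξ } with hSdef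
  have hSne : S.Nonempty := by
    refine ⟨_, (unifMeasure P).prod (unifMeasure Q), ?_, ?_, rfl⟩
    · rw [Measure.map_fst_prod, measure_univ, one_smul]
    · rw [Measure.map_snd_prod, measure_univ, one_smul]
  have hlt : sInf S < b ^ 2 := by
    have := hW
    rw [W2, transportCost] at this
    exact (Real.sqrt_lt' hb).1 this
  obtain ⟨c, ⟨ξ, hm1, hm2, hc⟩, hcb⟩ := exists_lt_of_csInf_lt hSne hlt
  exact ⟨ξ, hm1, hm2, hc ▸ hcb⟩

end CB

open CB in
/-- If `W₂(m_{P_i}, m_Q) → 0` for convex bodies `P i` and `Q`, then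
`vol(P_i △ Q) → 0`. -/
theorem stmt3 (n : ℕ) (P : ℕ → Set (Euc n)) (Q : Set (Euc n))
    (hP : ∀ i, IsConvexBody (P i)) (hQ : IsConvexBody Q)
    (h : Tendsto (fun i => W2 (unifMeasure (P i)) (unifMeasure Q)) atTop (𝓝 0)) :
    Tendsto (fun i => (volume (symmDiff (P i) Q)).toReal) atTop (𝓝 0) := by
  rw [Metric.tendsto_atTop]
  intro ε hε
  set VQ := (volume Q).toReal with hVQ
  have hVQpos : 0 < VQ := ENNReal.toReal_pos (vol_pos hQ).ne' (vol_ne_top hQ)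
  -- inner ball of Q
  obtain ⟨c0, hc0i⟩ := hQ.2.2
  obtain ⟨ρ, hρ, hballi⟩ := Metric.isOpen_iff.1 isOpen_interior c0 hc0i
  have hball : ball c0 ρ ⊆ Q := hballi.trans interior_subset
  -- choose lam
  set t : ℝ := min (1/2) (ε / (4 * (VQ + 1) * (n + 1))) with ht
  have htpos : 0 < t := lt_min (by norm_num) (by positivity)
  set lam : ℝ := 1 - t with hlam
  have hlam0 : 0 ≤ lam := by
    have : t ≤ 1/2 := min_le_left _ _
    simp only [hlam]; linarith
  have hlam1 : lam < 1 := by simp only [hlam]; linarith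
  have hlam_bound : (1 - lam ^ n) * VQ < ε / 4 := by
    have hbern : 1 + (n : ℝ) * (-t) ≤ (1 + -t) ^ n :=
      one_add_mul_le_pow (by linarith [min_le_left (1/2 : ℝ) (ε / (4 * (VQ + 1) * (n + 1)))]) n
    have h1 : 1 - lam ^ n ≤ (n : ℝ) * t := by
      have : (1 : ℝ) + -t = lam := by simp only [hlam]; ring
      rw [this] at hbern; linarith
    have h2 : (1 - lam ^ n) * VQ ≤ (n : ℝ) * t * VQ :=
      mul_le_mul_of_nonneg_right h1 hVQpos.le
    have htle : t ≤ ε / (4 * (VQ + 1) * (n + 1)) := min_le_right _ _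
    have hts : (n : ℝ) * t * VQ < ε / 4 := by
      have hd : (0:ℝ) < 4 * (VQ + 1) * (n + 1) := by positivity
      have key : t * (4 * (VQ + 1) * (n + 1)) ≤ ε := by
        rw [← le_div_iff₀ hd]; exact htle
      have hnn : (0:ℝ) ≤ (n:ℝ) := Nat.cast_nonneg n
      nlinarith [htpos, hVQpos, hnn]
    linarith
  -- choose r
  have hcth := tendsto_measure_cthickening_of_isCompact (μ := volume) hQ.2.1
  have hcthR : Tendsto (fun r => (volume (cthickening r Q)).toReal) (𝓝 0) (𝓝 VQ) :=
    (ENNReal.tendsto_toReal (vol_ne_top hQ)).comp hcth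
  have hev : ∀ᶠ r in 𝓝 (0:ℝ), (volume (cthickening r Q)).toReal < VQ + ε / 4 :=
    hcthR.eventually_lt_const (by linarith)
  obtain ⟨η, hη, hηr⟩ := Metric.eventually_nhds_iff.1 hev
  set r : ℝ := min (η / 2) 1 with hrdef
  have hrpos : 0 < r := lt_min (by linarith) one_pos
  have hr1 : r ≤ 1 := min_le_right _ _
  have hrQ : (volume (cthickening r Q)).toReal < VQ + ε / 4 := by
    apply hηr
    rw [Real.dist_eq, sub_zero, abs_of_pos hrpos]
    calc r ≤ η / 2 := min_le_left _ _
      _ < η := by linarith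
  -- constants
  set δ : ℝ := (1 - lam) * ρ / 2 with hδdef
  have hδ : 0 < δ := by
    have : 1 - lam = t := by simp only [hlam]; ring
    rw [hδdef, this]; positivity
  set vb : ℝ := (volume (ball (0 : Euc n) (δ / 4))).toReal with hvb
  have hvbpos : 0 < vb :=
    ENNReal.toReal_pos (measure_ball_pos _ _ (by positivity)).ne' measure_ball_lt_top.ne
  set VT1 : ℝ := (volume (cthickening 1 Q)).toReal with hVT1
  have hVT1nonneg : 0 ≤ VT1 := ENNReal.toReal_nonneg
  set κ : ℝ := min ((δ / 2) ^ 2 * vb / VQ) (min (ε / 4 * r ^ 2 / (2 * VT1 + 1)) (1/2)) with hκ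
  have hκpos : 0 < κ := by
    apply lt_min (by positivity) (lt_min (by positivity) (by norm_num))
  have hb : 0 < Real.sqrt κ := Real.sqrt_pos.2 hκpos
  have hevW : ∀ᶠ i in atTop, W2 (unifMeasure (P i)) (unifMeasure Q) < Real.sqrt κ :=
    h.eventually_lt_const hb
  obtain ⟨N, hN⟩ := eventually_atTop.1 hevW
  refine ⟨N, fun i hi => ?_⟩
  obtain ⟨ξ, hm1, hm2, hcost⟩ := exists_coupling (hP i) hQ hb (hN i hi)
  rw [Real.sq_sqrt hκpos.le] at hcost
  set cost := ∫ p, dist p.1 p.2 ^ 2 ∂ξ with hcostdef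
  have hcnonneg : 0 ≤ cost := integral_nonneg (fun p => by positivity)
  have hc1 : cost < (δ / 2) ^ 2 * vb / VQ := hcost.trans_le (min_le_left _ _)
  have hc2 : cost < ε / 4 * r ^ 2 / (2 * VT1 + 1) :=
    hcost.trans_le ((min_le_right _ _).trans (min_le_left _ _))
  have hc3 : cost ≤ 1 / 2 :=
    (hcost.trans_le ((min_le_right _ _).trans (min_le_right _ _))).le
  -- Q-side
  set Qlam := AffineMap.homothety c0 lam '' Q with hQlam
  have hQlamsub : Qlam ⊆ Q :=
    homothety_subset hQ (interior_subset hc0i) hlam0 hlam1.le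
  have hQlamP : Qlam ⊆ P i := by
    intro x hx
    exact deep_mem hm1 hm2 (hP i) hQ hδ (homothety_deep hQ hρ hball hlam0 hlam1 hx) hc1
  have hQlam_meas : MeasurableSet Qlam :=
    ((hQ.2.1.image (AffineMap.homothety_continuous c0 lam)).isClosed).measurableSet
  have hQlam_vol : volume Qlam = ENNReal.ofReal (lam ^ n) * volume Q :=
    homothety_volume Q c0 hlam0
  have hQP_bound : (volume (Q \ P i)).toReal < ε / 4 := by
    have hsub : Q \ P i ⊆ Q \ Qlam := diff_subset_diff_right hQlamP
    have hfinQ : volume (Q \ Qlam) ≠ ∞ :=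
      ((measure_mono diff_subset).trans_lt (lt_top_iff_ne_top.2 (vol_ne_top hQ))).ne
    have h1' : (volume (Q \ P i)).toReal ≤ (volume (Q \ Qlam)).toReal :=
      ENNReal.toReal_mono hfinQ (measure_mono hsub)
    have hdiffeq : volume (Q \ Qlam) = volume Q - volume Qlam :=
      measure_diff hQlamsub hQlam_meas.nullMeasurableSet
        (((measure_mono hQlamsub).trans_lt (lt_top_iff_ne_top.2 (vol_ne_top hQ))).ne)
    have hQlamtr : (volume Qlam).toReal = lam ^ n * VQ := by
      rw [hQlam_vol, ENNReal.toReal_mul, ENNReal.toReal_ofReal (pow_nonneg hlam0 _)]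
    have : (volume (Q \ Qlam)).toReal = VQ - lam ^ n * VQ := by
      rw [hdiffeq, ENNReal.toReal_sub_of_le (measure_mono hQlamsub) (vol_ne_top hQ), hQlamtr]
    rw [this] at h1'
    calc (volume (Q \ P i)).toReal ≤ VQ - lam ^ n * VQ := h1'
      _ = (1 - lam ^ n) * VQ := by ring
      _ < ε / 4 := hlam_bound
  -- P-side
  have hVP := volP_le hm1 hm2 (hP i) hQ hc3
  have hfar := far_bound hm1 hm2 (hP i) hQ hrpos
  set T := cthickening r Q with hT
  have hQT : Q ⊆ T := self_subset_cthickening Q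
  have hTfin : volume T ≠ ∞ := hQ.2.1.isBounded.cthickening.measure_lt_top.ne
  have hsub2 : P i \ Q ⊆ (P i \ T) ∪ (T \ Q) := by
    intro x hx
    by_cases hxT : x ∈ T
    · exact Or.inr ⟨hxT, hx.2⟩
    · exact Or.inl ⟨hx.1, hxT⟩
  have hTQ_bound : (volume (T \ Q)).toReal < ε / 4 := by
    have : volume (T \ Q) = volume T - volume Q :=
      measure_diff hQT hQ.2.1.isClosed.measurableSet.nullMeasurableSet (vol_ne_top hQ)
    rw [this, ENNReal.toReal_sub_of_le (measure_mono hQT) hTfin]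
    rw [← hVQ]
    linarith [hrQ]
  have hPT_bound : (volume (P i \ T)).toReal < ε / 4 := by
    have hchain : (volume (P i \ T)).toReal ≤ (volume (P i)).toReal * cost / r ^ 2 := hfar
    have hstep : (volume (P i)).toReal * cost ≤ (2 * VT1 + 1) * cost := by
      apply mul_le_mul_of_nonneg_right _ hcnonneg
      linarith [hVP]
    have hfinal : (2 * VT1 + 1) * cost / r ^ 2 < ε / 4 := by
      rw [div_lt_iff₀ (by positivity : (0:ℝ) < r ^ 2)]
      have h2V : (0:ℝ) < 2 * VT1 + 1 := by linarith
      have := (mul_lt_mul_iff_right₀ h2V).2 hc2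
      calc (2 * VT1 + 1) * cost < (2 * VT1 + 1) * (ε / 4 * r ^ 2 / (2 * VT1 + 1)) := this
        _ = ε / 4 * r ^ 2 := by field_simp
    calc (volume (P i \ T)).toReal ≤ (volume (P i)).toReal * cost / r ^ 2 := hchain
      _ ≤ (2 * VT1 + 1) * cost / r ^ 2 := (div_le_div_iff_of_pos_right (by positivity)).2 hstep
      _ < ε / 4 := hfinal
  -- combine
  have hPQ_fin : volume (P i \ Q) ≠ ∞ :=
    ((measure_mono diff_subset).trans_lt (lt_top_iff_ne_top.2 (vol_ne_top (hP i)))).ne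
  have hQP_fin : volume (Q \ P i) ≠ ∞ :=
    ((measure_mono diff_subset).trans_lt (lt_top_iff_ne_top.2 (vol_ne_top hQ))).ne
  have hPQ_bound : (volume (P i \ Q)).toReal < ε / 2 := by
    have hm : volume (P i \ Q) ≤ volume (P i \ T) + volume (T \ Q) :=
      (measure_mono hsub2).trans (measure_union_le _ _)
    have hfin1 : volume (P i \ T) ≠ ∞ :=
      ((measure_mono diff_subset).trans_lt (lt_top_iff_ne_top.2 (vol_ne_top (hP i)))).ne
    have hfin2 : volume (T \ Q) ≠ ∞ :=
      ((measure_mono diff_subset).trans_lt (lt_top_iff_ne_top.2 hTfin)).ne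
    calc (volume (P i \ Q)).toReal
        ≤ (volume (P i \ T) + volume (T \ Q)).toReal :=
          ENNReal.toReal_mono (by rw [ENNReal.add_ne_top]; exact ⟨hfin1, hfin2⟩) hm
      _ = (volume (P i \ T)).toReal + (volume (T \ Q)).toReal :=
          ENNReal.toReal_add hfin1 hfin2
      _ < ε / 2 := by linarith
  have hsd : volume (symmDiff (P i) Q) ≤ volume (P i \ Q) + volume (Q \ P i) := by
    rw [Set.symmDiff_def]
    exact measure_union_le _ _
  have hsd_real : (volume (symmDiff (P i) Q)).toReal < ε := by
    calc (volume (symmDiff (P i) Q)).toReal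
        ≤ (volume (P i \ Q) + volume (Q \ P i)).toReal :=
          ENNReal.toReal_mono (by rw [ENNReal.add_ne_top]; exact ⟨hPQ_fin, hQP_fin⟩) hsd
      _ = (volume (P i \ Q)).toReal + (volume (Q \ P i)).toReal :=
          ENNReal.toReal_add hPQ_fin hQP_fin
      _ < ε := by linarith
  rw [Real.dist_eq, sub_zero, abs_of_nonneg ENNReal.toReal_nonneg]
  exact hsd_real
end

section
/- Let {P_i} be a sequence of Delzant polytopes in ℝ² converging in Hausdorff distance to a Delzant polytope P. Then for each edge of P with primitive inward integral normal vector ν, there exists (after passing to a subsequence) a sequence of edges of P_i whose primitive inward integral normal vectors ν_i satisfy ν_i → ν; in fact ν_i = ν for all sufficiently large i. -/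
open MeasureTheory Filter Topology Metric
open scoped RealInnerProductSpace ENNReal

/-- An integral vector: all coordinates are integers. -/
def IsIntegralVec {n : ℕ} (v : Euc n) : Prop := ∀ j, ∃ m : ℤ, v j = (m : ℝ)

/-- A primitive integral vector: a nonzero integral vector which is not a
nontrivial integer multiple of another integral vector. -/
def IsPrimitiveVec {n : ℕ} (v : Euc n) : Prop :=
  IsIntegralVec v ∧ v ≠ 0 ∧ ∀ (k : ℤ) (u : Euc n),
    IsIntegralVec u → v = (k : ℝ) • u → k = 1 ∨ k = -1

/-- A Delzant polytope: a convex polytope with nonempty interior such that at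
each vertex, the polytope locally coincides with a cone cut out by `n`
primitive integral inward normal vectors forming a `ℤ`-basis of `ℤⁿ`
(determinant `±1`); this encodes simplicity, rationality and smoothness. -/
def IsDelzant {n : ℕ} (P : Set (Euc n)) : Prop :=
  (∃ S : Finset (Euc n), P = convexHull ℝ (S : Set (Euc n))) ∧
  (interior P).Nonempty ∧
  ∀ x ∈ Set.extremePoints ℝ P, ∃ ν : Fin n → Euc n,
    (∀ j, IsPrimitiveVec (ν j)) ∧
    |Matrix.det (Matrix.of fun j k => ν j k)| = 1 ∧
    ∃ ε > 0, P ∩ Metric.ball x ε =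
      {y : Euc n | ∀ j, 0 ≤ ⟪y - x, ν j⟫} ∩ Metric.ball x ε

/-- `F` is a facet ((n-1)-dimensional nonempty exposed face) of `P`, with inward
normal vector `ν` and support value `lam`: `P ⊆ {⟨x,ν⟩ ≥ lam}` and
`F = P ∩ {⟨x,ν⟩ = lam}`. -/
def IsFacetWithInwardNormal {n : ℕ} (P F : Set (Euc n)) (ν : Euc n) (lam : ℝ) : Prop :=
  IsExposed ℝ P F ∧ F.Nonempty ∧ Module.finrank ℝ (vectorSpan ℝ F) = n - 1 ∧
  (∀ x ∈ P, lam ≤ ⟪x, ν⟫) ∧ F = {x ∈ P | ⟪x, ν⟫ = lam}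

/-- The number of facets of `P`. -/
noncomputable def facetCount {n : ℕ} (P : Set (Euc n)) : ℕ :=
  Set.ncard {F : Set (Euc n) | IsExposed ℝ P F ∧ F.Nonempty ∧
    Module.finrank ℝ (vectorSpan ℝ F) = n - 1}

section helpers

lemma inner2 (x y : Euc 2) : ⟪x, y⟫ = x 0 * y 0 + x 1 * y 1 := by
  simp [PiLp.inner_apply, Fin.sum_univ_two, RCLike.inner_apply, mul_comm]

lemma norm2 (x : Euc 2) : ‖x‖^2 = x 0^2 + x 1^2 := by
  rw [← real_inner_self_eq_norm_sq, inner2]; ring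

lemma sub2 (u w : Euc 2) (j : Fin 2) : (u - w) j = u j - w j := by simp

lemma absg_le (v ν : Euc 2) : |v 0 * ν 1 - v 1 * ν 0| ≤ ‖v‖ * ‖ν‖ := by
  have h1 := norm2 v; have h2 := norm2 ν
  have hv := norm_nonneg v; have hν := norm_nonneg ν
  have key : (v 0 * ν 1 - v 1 * ν 0)^2 ≤ (‖v‖ * ‖ν‖)^2 := by
    nlinarith [sq_nonneg (v 0 * ν 0 + v 1 * ν 1)]
  exact abs_le_of_sq_le_sq key (mul_nonneg hv hν)

end helpers

lemma final_contra (V ℓ h D ε a b p S1 S2 S3 F1 F2 F3 G1 G2 G3 : ℝ)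
    (hV : 1 ≤ V^2) (hl : 0 < ℓ) (hh : 0 < h)
    (ha : 1 ≤ a) (hb : 1 ≤ b)
    (hS1 : 0 ≤ S1) (hS2 : 0 ≤ S2) (hS3 : 0 ≤ S3)
    (hid1 : S1 * V^2 = F1 * p + G1 * b) (hid2 : S2 * V^2 = F2 * p + G2 * b)
    (hid3 : S3 * V^2 = F3 * p + G3 * b)
    (hFa1 : a * S1 ≤ F1) (hFa2 : a * S2 ≤ F2) (hFa3 : a * S3 ≤ F3)
    (hF1 : F1 ≤ ε) (hF2 : F2 ≤ ε) (hF10 : 0 ≤ F1) (hF20 : 0 ≤ F2)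
    (hG : ℓ ≤ |G1 - G2|)
    (hF3 : h ≤ F3) (hF3D : F3 ≤ D) (hG3 : |G3| ≤ D)
    (hε : 0 < ε) (hsmall : 4 * ε * V^2 * D < ℓ * h) : False := by
  have hV0 : (0:ℝ) < V^2 := by linarith
  have hb0 : (0:ℝ) < b := by linarith
  have hS1' : S1 ≤ ε := by nlinarith
  have hS2' : S2 ≤ ε := by nlinarith
  have hS3' : S3 ≤ F3 := by nlinarith
  have hDpos : 0 < D := by linarith
  have hG3l : -D ≤ G3 := (abs_le.mp hG3).1
  have hG3u : G3 ≤ D := (abs_le.mp hG3).2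
  have key2 : h * |p| ≤ D * V^2 + D * b := by
    rcases le_or_gt 0 p with hp | hp
    · rw [abs_of_nonneg hp]
      have t1 : h * p ≤ F3 * p := mul_le_mul_of_nonneg_right hF3 hp
      have t2 : S3 * V^2 ≤ F3 * V^2 := mul_le_mul_of_nonneg_right hS3' hV0.le
      have t3 : F3 * V^2 ≤ D * V^2 := mul_le_mul_of_nonneg_right hF3D hV0.le
      have t4 : -(G3 * b) ≤ D * b := by
        have := mul_le_mul_of_nonneg_right (neg_le.mpr (neg_le.mp (by linarith : -D ≤ G3))) hb0.le
        nlinarith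
      linarith
    · rw [abs_of_neg hp]
      have t1 : h * (-p) ≤ F3 * (-p) := mul_le_mul_of_nonneg_right hF3 (by linarith)
      have t2 : 0 ≤ S3 * V^2 := mul_nonneg hS3 hV0.le
      have t5 : G3 * b ≤ D * b := mul_le_mul_of_nonneg_right hG3u hb0.le
      have t6 : 0 ≤ D * V^2 := by positivity
      have t7 : F3 * (-p) = -(F3 * p) := by ring
      linarith
  have e1 : 0 ≤ F1 * p + G1 * b := by
    have : 0 ≤ S1 * V^2 := mul_nonneg hS1 hV0.le
    linarith
  have e1' : F1 * p + G1 * b ≤ ε * V^2 := by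
    have : S1 * V^2 ≤ ε * V^2 := mul_le_mul_of_nonneg_right hS1' hV0.le
    linarith
  have e2 : 0 ≤ F2 * p + G2 * b := by
    have : 0 ≤ S2 * V^2 := mul_nonneg hS2 hV0.le
    linarith
  have e2' : F2 * p + G2 * b ≤ ε * V^2 := by
    have : S2 * V^2 ≤ ε * V^2 := mul_le_mul_of_nonneg_right hS2' hV0.le
    linarith
  have hd1 : |(F1 * p + G1 * b) - (F2 * p + G2 * b)| ≤ ε * V^2 := by
    rw [abs_le]; constructor <;> linarith
  have hFd : |F1 - F2| ≤ ε := by rw [abs_le]; constructor <;> linarith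
  have h4 : |(F1 - F2) * p| ≤ ε * |p| := by
    rw [abs_mul]; exact mul_le_mul_of_nonneg_right hFd (abs_nonneg p)
  have h2 : |(G1 - G2) * b| ≤ ε * V^2 + ε * |p| := by
    have e : (G1 - G2) * b =
        ((F1 * p + G1 * b) - (F2 * p + G2 * b)) - (F1 - F2) * p := by ring
    rw [e]
    calc |((F1 * p + G1 * b) - (F2 * p + G2 * b)) - (F1 - F2) * p|
        ≤ |(F1 * p + G1 * b) - (F2 * p + G2 * b)| + |(F1 - F2) * p| := abs_sub _ _
      _ ≤ ε * V^2 + ε * |p| := add_le_add hd1 h4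
  have key1 : ℓ * b ≤ ε * V^2 + ε * |p| := by
    have h1 : ℓ * b ≤ |G1 - G2| * b := mul_le_mul_of_nonneg_right hG hb0.le
    have h1' : |G1 - G2| * b = |(G1 - G2) * b| := by rw [abs_mul, abs_of_pos hb0]
    linarith
  have c1 : ℓ * b * h ≤ ε * V^2 * h + ε * (h * |p|) := by
    have u1 := mul_le_mul_of_nonneg_right key1 hh.le
    have expand : (ε * V^2 + ε * |p|) * h = ε * V^2 * h + ε * (h * |p|) := by ring
    rw [expand] at u1
    exact u1
  have c2 : ε * (h * |p|) ≤ ε * (D * V^2 + D * b) :=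
    mul_le_mul_of_nonneg_left key2 hε.le
  have hhD : h ≤ D := le_trans hF3 hF3D
  have m1 : ε * V^2 * h ≤ ε * V^2 * D := by
    have : 0 ≤ ε * V^2 := by positivity
    exact mul_le_mul_of_nonneg_left hhD this
  have hεD4 : ε * D ≤ ℓ * h / 4 := by
    have t := mul_le_mul_of_nonneg_left hV (by positivity : (0:ℝ) ≤ ε * D)
    have t1 : ε * D * 1 = ε * D := by ring
    have t2 : ε * D * V^2 = (4 * ε * V^2 * D)/4 := by ring
    linarith
  have m2 : ε * D * b ≤ ℓ * h / 4 * b := mul_le_mul_of_nonneg_right hεD4 hb0.le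
  have m4 : ℓ * h * 1 ≤ ℓ * h * b := mul_le_mul_of_nonneg_left hb (mul_pos hl hh).le
  have r1 : ℓ * b * h = ℓ * h * b := by ring
  have r2 : ε * (D * V^2 + D * b) = ε * D * V^2 + ε * D * b := by ring
  have r3 : ε * D * V^2 = ε * V^2 * D := by ring
  have r4 : ℓ * h / 4 * b = (ℓ * h * b) / 4 := by ring
  have r5 : ℓ * h * 1 = ℓ * h := by ring
  have hlh : 0 < ℓ * h := mul_pos hl hh
  linarith


set_option maxHeartbeats 1000000 in
lemma delzant_facet
    (Q : Set (Euc 2)) (ν : Euc 2) (lam : ℝ)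
    (hν0 : ν ≠ 0) (hνint : IsIntegralVec ν)
    (hQlow : ∀ x ∈ Q, lam ≤ ⟪x, ν⟫)
    (p q z₀ : Euc 2) (hpQ : p ∈ Q) (hqQ : q ∈ Q) (hzQ : z₀ ∈ Q)
    (hfp : ⟪p, ν⟫ = lam) (hfq : ⟪q, ν⟫ = lam)
    (L h₀ R δ : ℝ)
    (hL : L = dist p q) (hLpos : 0 < L)
    (h0pos : 0 < h₀) (hz0 : lam + h₀ ≤ ⟪z₀, ν⟫)
    (hR : Q ⊆ Metric.closedBall 0 R) (hR0 : 0 ≤ R)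
    (hδpos : 0 < δ) (hδ1 : δ ≤ 1) (hδL : 4 * δ ≤ L)
    (hδh : 4 * δ * ‖ν‖ ≤ h₀)
    (hδs : 32 * δ * ‖ν‖^3 * ((2*R+2) * ‖ν‖) < L * ‖ν‖ * h₀)
    (Pi : Set (Euc 2)) (hPi : IsDelzant Pi)
    (hd : Metric.hausdorffDist Pi Q < δ) :
    ∃ Fi lami, IsFacetWithInwardNormal Pi Fi ν lami := by
  obtain ⟨SP, hSP⟩ := hPi.1
  have hPic : IsCompact Pi := hSP ▸ SP.finite_toSet.isCompact_convexHull ℝ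
  have hconv : Convex ℝ Pi := hSP ▸ convex_convexHull ℝ _
  obtain ⟨zint, hzint⟩ := hPi.2.1
  have hne : Pi.Nonempty := ⟨zint, interior_subset hzint⟩
  have hQne : Q.Nonempty := ⟨p, hpQ⟩
  have hQb : Bornology.IsBounded Q := Metric.isBounded_closedBall.subset hR
  have hfin : EMetric.hausdorffEdist Pi Q ≠ ⊤ :=
    Metric.hausdorffEdist_ne_top_of_nonempty_of_bounded hne hQne hPic.isBounded hQb
  have hfin' : EMetric.hausdorffEdist Q Pi ≠ ⊤ :=
    Metric.hausdorffEdist_ne_top_of_nonempty_of_bounded hQne hne hQb hPic.isBounded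
  have hd' : Metric.hausdorffDist Q Pi < δ := by
    rwa [Metric.hausdorffDist_comm] at hd
  obtain ⟨x₀, hx₀, hmin⟩ := hPic.exists_isMinOn hne
    ((Continuous.inner continuous_id continuous_const).continuousOn :
      ContinuousOn (fun y : Euc 2 => ⟪y, ν⟫) Pi)
  set lami := ⟪x₀, ν⟫ with hlami
  have hlow : ∀ y ∈ Pi, lami ≤ ⟪y, ν⟫ := fun y hy => hmin hy
  set Fi : Set (Euc 2) := {y ∈ Pi | ⟪y, ν⟫ = lami} with hFidef
  have near : ∀ w ∈ Q, ∃ w' ∈ Pi, dist w w' < δ := fun w hw =>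
    Metric.exists_dist_lt_of_hausdorffDist_lt hw hd' hfin'
  have nearQ : ∀ y ∈ Pi, ∃ w ∈ Q, dist y w < δ := fun y hy =>
    Metric.exists_dist_lt_of_hausdorffDist_lt hy hd hfin
  obtain ⟨p', hp', hpd⟩ := near p hpQ
  obtain ⟨q', hq', hqd⟩ := near q hqQ
  obtain ⟨z', hz', hzd⟩ := near z₀ hzQ
  obtain ⟨xb, hxb, hxbd⟩ := nearQ x₀ hx₀
  set V := ‖ν‖ with hVdef
  have hV0 : 0 < V := norm_pos_iff.mpr hν0
  have fdiff : ∀ y z : Euc 2, ⟪y, ν⟫ - ⟪z, ν⟫ ≤ dist y z * V := by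
    intro y z
    have h1 : ⟪y, ν⟫ - ⟪z, ν⟫ = ⟪y - z, ν⟫ := (inner_sub_left _ _ _).symm
    rw [h1, dist_eq_norm]
    exact le_trans (le_abs_self _) (abs_real_inner_le_norm _ _)
  have hfp' : ⟪p', ν⟫ ≤ lam + δ * V := by
    have h1 := fdiff p' p
    have h2 : dist p' p ≤ δ := by rw [dist_comm]; exact hpd.le
    have h3 := mul_le_mul_of_nonneg_right h2 hV0.le
    rw [hfp] at h1; linarith
  have hfq' : ⟪q', ν⟫ ≤ lam + δ * V := by
    have h1 := fdiff q' q
    have h2 : dist q' q ≤ δ := by rw [dist_comm]; exact hqd.le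
    have h3 := mul_le_mul_of_nonneg_right h2 hV0.le
    rw [hfq] at h1; linarith
  have hfz' : lam + h₀ - δ * V ≤ ⟪z', ν⟫ := by
    have h1 := fdiff z₀ z'
    have h3 := mul_le_mul_of_nonneg_right hzd.le hV0.le
    linarith
  have hlam_lb : lam - δ * V ≤ lami := by
    have h1 := hQlow xb hxb
    have h2 := fdiff xb x₀
    have h4 : dist xb x₀ ≤ δ := by rw [dist_comm]; exact hxbd.le
    have h3 := mul_le_mul_of_nonneg_right h4 hV0.le
    linarith
  have hlam_ub : lami ≤ lam + δ * V := le_trans (hlow p' hp') hfp'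
  -- norm bounds
  have hnormQ : ∀ w ∈ Q, ‖w‖ ≤ R := fun w hw => mem_closedBall_zero_iff.mp (hR hw)
  have hnear_norm : ∀ w w' : Euc 2, w ∈ Q → dist w w' < δ → ‖w'‖ ≤ R + 1 := by
    intro w w' hw hdist
    have h1 : w' = w + (w' - w) := by abel
    have h2 : ‖w + (w' - w)‖ ≤ ‖w‖ + ‖w' - w‖ := norm_add_le _ _
    have h3 : ‖w' - w‖ = dist w w' := by rw [dist_comm, dist_eq_norm]
    rw [← h1] at h2
    have := hnormQ w hw
    linarith
  have hnp' : ‖p'‖ ≤ R + 1 := hnear_norm p p' hpQ hpd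
  have hnq' : ‖q'‖ ≤ R + 1 := hnear_norm q q' hqQ hqd
  have hnz' : ‖z'‖ ≤ R + 1 := hnear_norm z₀ z' hzQ hzd
  have hnx₀ : ‖x₀‖ ≤ R + 1 := hnear_norm xb x₀ hxb (by rwa [dist_comm])
  have hVsq : V^2 = ν 0^2 + ν 1^2 := norm2 ν
  have hV1 : 1 ≤ V^2 := by
    obtain ⟨n0, hn0⟩ := hνint 0
    obtain ⟨n1, hn1⟩ := hνint 1
    have hνne : ν 0 ≠ 0 ∨ ν 1 ≠ 0 := by
      by_contra hc
      push_neg at hc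
      apply hν0
      ext j
      fin_cases j
      · exact hc.1
      · exact hc.2
    rw [hVsq, hn0, hn1]
    rcases hνne with hcomp | hcomp
    · rw [hn0] at hcomp
      have h5 : n0 ≠ 0 := fun hh => hcomp (by rw [hh]; norm_num)
      have h6 : (1:ℤ) ≤ n0^2 := by nlinarith [Int.one_le_abs h5, sq_abs n0, abs_nonneg n0]
      have h7 : (1:ℝ) ≤ (n0:ℝ)^2 := by exact_mod_cast h6
      nlinarith [sq_nonneg ((n1:ℝ))]
    · rw [hn1] at hcomp
      have h5 : n1 ≠ 0 := fun hh => hcomp (by rw [hh]; norm_num)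
      have h6 : (1:ℤ) ≤ n1^2 := by nlinarith [Int.one_le_abs h5, sq_abs n1, abs_nonneg n1]
      have h7 : (1:ℝ) ≤ (n1:ℝ)^2 := by exact_mod_cast h6
      nlinarith [sq_nonneg ((n0:ℝ))]
  -- THE KEY STEP: Fi has a second point
  have htwo : ∃ y ∈ Fi, y ≠ x₀ := by
    by_contra hsing
    push_neg at hsing
    have hFisub : ∀ y ∈ Pi, ⟪y, ν⟫ = lami → y = x₀ := fun y hy he => hsing y ⟨hy, he⟩
    -- x₀ is an extreme point
    have hext : x₀ ∈ Set.extremePoints ℝ Pi := by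
      refine ⟨hx₀, fun y hy z hz hseg => ?_⟩
      obtain ⟨s, t, hs, ht, hst, heq⟩ := hseg
      have hf : s * ⟪y, ν⟫ + t * ⟪z, ν⟫ = lami := by
        rw [hlami, ← heq, inner_add_left, real_inner_smul_left, real_inner_smul_left]
      have hy' := hlow y hy
      have hz' := hlow z hz
      have hcomb : s * (⟪y, ν⟫ - lami) + t * (⟪z, ν⟫ - lami) = 0 := by
        linear_combination hf - lami * hst
      have t1 : 0 ≤ s * (⟪y, ν⟫ - lami) := mul_nonneg hs.le (by linarith only [hy'])
      have t2 : 0 ≤ t * (⟪z, ν⟫ - lami) := mul_nonneg ht.le (by linarith only [hz'])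
      have t3 : s * (⟪y, ν⟫ - lami) = 0 := by linarith only [hcomb, t1, t2]
      have t4 : t * (⟪z, ν⟫ - lami) = 0 := by linarith only [hcomb, t1, t2]
      have hfy : ⟪y, ν⟫ = lami := by
        rcases mul_eq_zero.mp t3 with hc | hc
        · exact absurd hc hs.ne'
        · linarith only [hc]
      have hfz : ⟪z, ν⟫ = lami := by
        rcases mul_eq_zero.mp t4 with hc | hc
        · exact absurd hc ht.ne'
        · linarith only [hc]
      exact hFisub y hy hfy
    obtain ⟨ν', hprim, hdet, ε₀, hε₀, hball⟩ := hPi.2.2 x₀ hext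
    obtain ⟨a0, hcA0⟩ := (hprim 0).1 0
    obtain ⟨a1, hcA1⟩ := (hprim 0).1 1
    obtain ⟨b0, hcB0⟩ := (hprim 1).1 0
    obtain ⟨b1, hcB1⟩ := (hprim 1).1 1
    obtain ⟨n0, hn0⟩ := hνint 0
    obtain ⟨n1, hn1⟩ := hνint 1
    have habsd : |ν' 0 0 * ν' 1 1 - ν' 0 1 * ν' 1 0| = 1 := by
      rw [Matrix.det_fin_two] at hdet
      simpa using hdet
    have hd2 : (ν' 0 0 * ν' 1 1 - ν' 0 1 * ν' 1 0)^2 = 1 := by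
      rw [← sq_abs, habsd, one_pow]
    set d : ℝ := ν' 0 0 * ν' 1 1 - ν' 0 1 * ν' 1 0 with hdd
    -- global cone containment
    have hcone : ∀ y ∈ Pi, ∀ j, 0 ≤ ⟪y - x₀, ν' j⟫ := by
      intro y hy j
      rcases eq_or_ne y x₀ with rfl | hyne
      · simp
      · have hnorm : 0 < ‖y - x₀‖ := by
          rw [norm_pos_iff, sub_ne_zero]; exact hyne
        set t : ℝ := min (1/2) (ε₀ / (2 * ‖y - x₀‖)) with htdef
        have ht0 : 0 < t := lt_min (by norm_num) (by positivity)
        have ht1 : t ≤ 1 := le_trans (min_le_left _ _) (by norm_num)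
        have hmem : x₀ + t • (y - x₀) ∈ Pi :=
          hconv.add_smul_sub_mem hx₀ hy (Set.mem_Icc.mpr ⟨ht0.le, ht1⟩)
        have hballm : x₀ + t • (y - x₀) ∈ Metric.ball x₀ ε₀ := by
          rw [Metric.mem_ball, dist_eq_norm, add_sub_cancel_left, norm_smul,
            Real.norm_eq_abs, abs_of_pos ht0]
          have h8 : t ≤ ε₀ / (2 * ‖y - x₀‖) := min_le_right _ _
          have h9 : t * ‖y - x₀‖ ≤ (ε₀ / (2 * ‖y - x₀‖)) * ‖y - x₀‖ :=
            mul_le_mul_of_nonneg_right h8 hnorm.le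
          have h10 : (ε₀ / (2 * ‖y - x₀‖)) * ‖y - x₀‖ = ε₀ / 2 := by
            field_simp
          linarith only [h9, h10, hε₀]
        have hinc : x₀ + t • (y - x₀) ∈
            {w : Euc 2 | ∀ j, 0 ≤ ⟪w - x₀, ν' j⟫} ∩ Metric.ball x₀ ε₀ := by
          rw [← hball]; exact ⟨hmem, hballm⟩
        have h5 := hinc.1 j
        simp only [Set.mem_setOf_eq, add_sub_cancel_left] at h5
        rw [real_inner_smul_left] at h5
        by_contra hcneg
        push_neg at hcneg
        exact absurd h5 (not_le.mpr (mul_neg_of_pos_of_neg ht0 hcneg))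
    -- strict positivity for nonzero cone directions
    have hposf : ∀ w : Euc 2, w ≠ 0 → (∀ j, 0 ≤ ⟪w, ν' j⟫) → 0 < ⟪w, ν⟫ := by
      intro w hw hwc
      have hnw : 0 < ‖w‖ := norm_pos_iff.mpr hw
      set t : ℝ := ε₀ / (2 * ‖w‖) with htdef
      have ht0 : 0 < t := by positivity
      have htw : t * ‖w‖ = ε₀ / 2 := by rw [htdef]; field_simp
      have hballm : x₀ + t • w ∈ Metric.ball x₀ ε₀ := by
        rw [Metric.mem_ball, dist_eq_norm, add_sub_cancel_left, norm_smul,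
          Real.norm_eq_abs, abs_of_pos ht0, htw]
        linarith only [hε₀]
      have hconem : x₀ + t • w ∈ {y : Euc 2 | ∀ j, 0 ≤ ⟪y - x₀, ν' j⟫} := by
        intro j
        rw [add_sub_cancel_left, real_inner_smul_left]
        exact mul_nonneg ht0.le (hwc j)
      have hmem : x₀ + t • w ∈ Pi := by
        have h11 : x₀ + t • w ∈ Pi ∩ Metric.ball x₀ ε₀ := by
          rw [hball]; exact ⟨hconem, hballm⟩
        exact h11.1
      have hge := hlow _ hmem
      have hfeq : ⟪x₀ + t • w, ν⟫ = lami + t * ⟪w, ν⟫ := by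
        rw [inner_add_left, real_inner_smul_left, hlami]
      by_contra hle
      push_neg at hle
      have htwn : t * ⟪w, ν⟫ ≤ 0 := mul_nonpos_iff.mpr (Or.inl ⟨ht0.le, hle⟩)
      have heq0 : ⟪x₀ + t • w, ν⟫ = lami :=
        le_antisymm (by rw [hfeq]; linarith only [htwn]) hge
      have hxeq := hFisub _ hmem heq0
      have hzero : t • w = 0 := by
        have h12 : x₀ + t • w = x₀ + 0 := by rw [add_zero]; exact hxeq
        exact add_left_cancel h12
      rcases smul_eq_zero.mp hzero with h13 | h13
      · exact ht0.ne' h13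
      · exact hw h13
    -- the dual basis vectors
    set w1 : Euc 2 := (WithLp.equiv 2 (Fin 2 → ℝ)).symm ![d * ν' 1 1, -(d * ν' 1 0)] with hw1def
    set w2 : Euc 2 := (WithLp.equiv 2 (Fin 2 → ℝ)).symm ![-(d * ν' 0 1), d * ν' 0 0] with hw2def
    have hw1_0 : w1 0 = d * ν' 1 1 := by rw [hw1def]; simp
    have hw1_1 : w1 1 = -(d * ν' 1 0) := by rw [hw1def]; simp
    have hw2_0 : w2 0 = -(d * ν' 0 1) := by rw [hw2def]; simp
    have hw2_1 : w2 1 = d * ν' 0 0 := by rw [hw2def]; simp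
    have hw1A : ⟪w1, ν' 0⟫ = 1 := by
      rw [inner2, hw1_0, hw1_1, hdd]; linear_combination hd2
    have hw1B : ⟪w1, ν' 1⟫ = 0 := by
      rw [inner2, hw1_0, hw1_1]; ring
    have hw2A : ⟪w2, ν' 0⟫ = 0 := by
      rw [inner2, hw2_0, hw2_1]; ring
    have hw2B : ⟪w2, ν' 1⟫ = 1 := by
      rw [inner2, hw2_0, hw2_1, hdd]; linear_combination hd2
    have hw1ne : w1 ≠ 0 := by
      intro h14
      rw [h14, inner_zero_left] at hw1A
      norm_num at hw1A
    have hw2ne : w2 ≠ 0 := by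
      intro h14
      rw [h14, inner_zero_left] at hw2B
      norm_num at hw2B
    have hw1cone : ∀ j, 0 ≤ ⟪w1, ν' j⟫ := by
      rw [Fin.forall_fin_two]
      exact ⟨by rw [hw1A]; norm_num, by rw [hw1B]⟩
    have hw2cone : ∀ j, 0 ≤ ⟪w2, ν' j⟫ := by
      rw [Fin.forall_fin_two]
      exact ⟨by rw [hw2A], by rw [hw2B]; norm_num⟩
    have hapos := hposf w1 hw1ne hw1cone
    have hbpos := hposf w2 hw2ne hw2cone
    have hw1ν : ⟪w1, ν⟫ = d * (ν' 1 1 * ν 0 - ν' 1 0 * ν 1) := by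
      rw [inner2, hw1_0, hw1_1]; ring
    have hw2ν : ⟪w2, ν⟫ = d * (ν' 0 0 * ν 1 - ν' 0 1 * ν 0) := by
      rw [inner2, hw2_0, hw2_1]; ring
    have ha1 : 1 ≤ ⟪w1, ν⟫ := by
      have hint : ⟪w1, ν⟫ = (((a0 * b1 - a1 * b0) * (b1 * n0 - b0 * n1) : ℤ) : ℝ) := by
        rw [hw1ν, hdd, hcA0, hcA1, hcB0, hcB1, hn0, hn1]; push_cast; ring
      rw [hint] at hapos ⊢
      have h15 : 0 < (a0 * b1 - a1 * b0) * (b1 * n0 - b0 * n1) := by exact_mod_cast hapos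
      exact_mod_cast h15
    have hb1 : 1 ≤ ⟪w2, ν⟫ := by
      have hint : ⟪w2, ν⟫ = (((a0 * b1 - a1 * b0) * (a0 * n1 - a1 * n0) : ℤ) : ℝ) := by
        rw [hw2ν, hdd, hcA0, hcA1, hcB0, hcB1, hn0, hn1]; push_cast; ring
      rw [hint] at hbpos ⊢
      have h15 : 0 < (a0 * b1 - a1 * b0) * (a0 * n1 - a1 * n0) := by exact_mod_cast hbpos
      exact_mod_cast h15
    -- scalar data for the three test points
    set pA : ℝ := ⟪ν' 0, ν⟫ with hpAdef
    have hSnonneg1 := hcone p' hp' 0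
    have hSnonneg2 := hcone q' hq' 0
    have hSnonneg3 := hcone z' hz' 0
    have hTnonneg1 := hcone p' hp' 1
    have hTnonneg2 := hcone q' hq' 1
    have hTnonneg3 := hcone z' hz' 1
    -- identities
    have hid : ∀ v : Euc 2, ⟪v, ν' 0⟫ * V^2 =
        ⟪v, ν⟫ * pA + (d * (v 0 * ν 1 - v 1 * ν 0)) * ⟪w2, ν⟫ := by
      intro v
      simp only [hpAdef, hw2ν, hVsq, inner2]
      rw [hdd]
      linear_combination (-((v 0 * ν 1 - v 1 * ν 0) * (ν' 0 0 * ν 1 - ν' 0 1 * ν 0))) * hd2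
    have hFST : ∀ v : Euc 2, ⟪w1, ν⟫ * ⟪v, ν' 0⟫ + ⟪w2, ν⟫ * ⟪v, ν' 1⟫ = ⟪v, ν⟫ := by
      intro v
      simp only [hw1ν, hw2ν, inner2]
      rw [hdd]
      linear_combination (v 0 * ν 0 + v 1 * ν 1) * hd2
    have hFa : ∀ y : Euc 2, y ∈ Pi → ⟪w1, ν⟫ * ⟪y - x₀, ν' 0⟫ ≤ ⟪y - x₀, ν⟫ := by
      intro y hy
      have h16 := hFST (y - x₀)
      have h17 : 0 ≤ ⟪w2, ν⟫ * ⟪y - x₀, ν' 1⟫ :=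
        mul_nonneg (by linarith only [hbpos]) (hcone y hy 1)
      linarith only [h16, h17]
    -- F bounds
    have hFsub : ∀ y : Euc 2, ⟪y - x₀, ν⟫ = ⟪y, ν⟫ - lami := by
      intro y; rw [inner_sub_left, hlami]
    have hF1l : 0 ≤ ⟪p' - x₀, ν⟫ := by rw [hFsub]; linarith only [hlow p' hp']
    have hF2l : 0 ≤ ⟪q' - x₀, ν⟫ := by rw [hFsub]; linarith only [hlow q' hq']
    have hF1u : ⟪p' - x₀, ν⟫ ≤ 2 * δ * V := by rw [hFsub]; linarith only [hfp', hlam_lb]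
    have hF2u : ⟪q' - x₀, ν⟫ ≤ 2 * δ * V := by rw [hFsub]; linarith only [hfq', hlam_lb]
    have hF3l : h₀ / 2 ≤ ⟪z' - x₀, ν⟫ := by
      rw [hFsub]
      have h26 : 2 * δ * V ≤ h₀ / 2 := by linarith only [hδh]
      linarith only [hfz', hlam_ub, h26]
    have hv3norm : ‖z' - x₀‖ ≤ 2*R + 2 := by
      have h27 := norm_sub_le z' x₀
      linarith only [h27, hnz', hnx₀]
    have hF3u : ⟪z' - x₀, ν⟫ ≤ (2*R+2) * V := by
      have h18 := le_trans (le_abs_self _) (abs_real_inner_le_norm (z' - x₀) ν)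
      have h19 := mul_le_mul_of_nonneg_right hv3norm hV0.le
      linarith only [h18, h19]
    have habsd1 : |d| = 1 := habsd
    have hG3 : |d * ((z' - x₀) 0 * ν 1 - (z' - x₀) 1 * ν 0)| ≤ (2*R+2) * V := by
      rw [abs_mul, habsd1, one_mul]
      have h18 := absg_le (z' - x₀) ν
      have h19 := mul_le_mul_of_nonneg_right hv3norm hV0.le
      linarith only [h18, h19]
    -- lower bound for |G1 - G2|
    have hG12 : L * V / 2 ≤ |d * ((p' - x₀) 0 * ν 1 - (p' - x₀) 1 * ν 0)
        - d * ((q' - x₀) 0 * ν 1 - (q' - x₀) 1 * ν 0)| := by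
      have hdecomp : d * ((p' - x₀) 0 * ν 1 - (p' - x₀) 1 * ν 0)
          - d * ((q' - x₀) 0 * ν 1 - (q' - x₀) 1 * ν 0)
          = d * (((p 0 - q 0) * ν 1 - (p 1 - q 1) * ν 0)
            + ((p' - p) 0 * ν 1 - (p' - p) 1 * ν 0)
            - ((q' - q) 0 * ν 1 - (q' - q) 1 * ν 0)) := by
        simp only [sub2]; ring
      have hpq0 : (p 0 - q 0) * ν 0 + (p 1 - q 1) * ν 1 = 0 := by
        have h20 : ⟪p - q, ν⟫ = 0 := by rw [inner_sub_left, hfp, hfq]; ring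
        rw [inner2] at h20
        simp only [sub2] at h20
        linarith only [h20]
      have hpqn : (p 0 - q 0)^2 + (p 1 - q 1)^2 = L^2 := by
        have h21 := norm2 (p - q)
        simp only [sub2] at h21
        rw [hL, dist_eq_norm]
        linarith only [h21]
      have hgpq_sq : ((p 0 - q 0) * ν 1 - (p 1 - q 1) * ν 0)^2 = (L*V)^2 := by
        have hc : ((p 0 - q 0) * ν 1 - (p 1 - q 1) * ν 0)^2
            = ((p 0 - q 0)^2 + (p 1 - q 1)^2) * (ν 0^2 + ν 1^2)
              - ((p 0 - q 0) * ν 0 + (p 1 - q 1) * ν 1)^2 := by ring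
        rw [hc, hpqn, hpq0, ← hVsq]
        ring
      have hgpq : |(p 0 - q 0) * ν 1 - (p 1 - q 1) * ν 0| = L * V := by
        have h22 := (sq_eq_sq_iff_abs_eq_abs _ _).mp hgpq_sq
        rwa [abs_of_pos (mul_pos hLpos hV0)] at h22
      have he1 : |(p' - p) 0 * ν 1 - (p' - p) 1 * ν 0| ≤ δ * V := by
        have h23 := absg_le (p' - p) ν
        have h24 : ‖p' - p‖ ≤ δ := by rw [← dist_eq_norm, dist_comm]; exact hpd.le
        have h25 := mul_le_mul_of_nonneg_right h24 hV0.le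
        linarith only [h23, h25]
      have he2 : |(q' - q) 0 * ν 1 - (q' - q) 1 * ν 0| ≤ δ * V := by
        have h23 := absg_le (q' - q) ν
        have h24 : ‖q' - q‖ ≤ δ := by rw [← dist_eq_norm, dist_comm]; exact hqd.le
        have h25 := mul_le_mul_of_nonneg_right h24 hV0.le
        linarith only [h23, h25]
      rw [hdecomp, abs_mul, habsd1, one_mul]
      have htri : |(p 0 - q 0) * ν 1 - (p 1 - q 1) * ν 0|
          ≤ |((p 0 - q 0) * ν 1 - (p 1 - q 1) * ν 0)
            + ((p' - p) 0 * ν 1 - (p' - p) 1 * ν 0)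
            - ((q' - q) 0 * ν 1 - (q' - q) 1 * ν 0)|
            + |(p' - p) 0 * ν 1 - (p' - p) 1 * ν 0|
            + |(q' - q) 0 * ν 1 - (q' - q) 1 * ν 0| := by
        set X := (p 0 - q 0) * ν 1 - (p 1 - q 1) * ν 0
        set Y := (p' - p) 0 * ν 1 - (p' - p) 1 * ν 0
        set Z := (q' - q) 0 * ν 1 - (q' - q) 1 * ν 0
        have e : X = (X + Y - Z) + (-Y) + Z := by ring
        calc |X| = |(X + Y - Z) + (-Y) + Z| := by rw [← e]
          _ ≤ |(X + Y - Z) + (-Y)| + |Z| := abs_add_le _ _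
          _ ≤ |X + Y - Z| + |(-Y)| + |Z| := by linarith [abs_add_le (X + Y - Z) (-Y)]
          _ = |X + Y - Z| + |Y| + |Z| := by rw [abs_neg]
      have h26 : 2 * δ * V ≤ L * V / 2 := by
        have h27 : 4 * δ * V ≤ L * V := mul_le_mul_of_nonneg_right hδL hV0.le
        linarith only [h27]
      rw [hgpq] at htri
      linarith only [htri, he1, he2, h26]
    -- apply the arithmetic contradiction
    exact final_contra V (L*V/2) (h₀/2) ((2*R+2)*V) (2*δ*V)
      ⟪w1, ν⟫ ⟪w2, ν⟫ pA
      ⟪p' - x₀, ν' 0⟫ ⟪q' - x₀, ν' 0⟫ ⟪z' - x₀, ν' 0⟫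
      ⟪p' - x₀, ν⟫ ⟪q' - x₀, ν⟫ ⟪z' - x₀, ν⟫
      (d * ((p' - x₀) 0 * ν 1 - (p' - x₀) 1 * ν 0))
      (d * ((q' - x₀) 0 * ν 1 - (q' - x₀) 1 * ν 0))
      (d * ((z' - x₀) 0 * ν 1 - (z' - x₀) 1 * ν 0))
      hV1 (by positivity) (by positivity) ha1 hb1
      hSnonneg1 hSnonneg2 hSnonneg3
      (hid (p' - x₀)) (hid (q' - x₀)) (hid (z' - x₀))
      (hFa p' hp') (hFa q' hq') (hFa z' hz')
      hF1u hF2u hF1l hF2l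
      hG12 hF3l hF3u hG3 (by positivity)
      (by
        have e1 : 4 * (2*δ*V) * V^2 * ((2*R+2)*V) = (32 * δ * V^3 * ((2*R+2) * V))/4 := by
          ring
        have e2 : (L*V/2) * (h₀/2) = (L * V * h₀)/4 := by ring
        rw [e1, e2]
        linarith only [hδs])
  -- assemble the facet
  obtain ⟨y₁, hy₁Fi, hy₁ne⟩ := htwo
  have hx₀Fi : x₀ ∈ Fi := ⟨hx₀, rfl⟩
  refine ⟨Fi, lami, ?_, ⟨x₀, hx₀Fi⟩, ?_, hlow, rfl⟩
  · -- exposed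
    intro _
    refine ⟨-(innerSL ℝ ν), ?_⟩
    ext w
    simp only [hFidef, Set.mem_setOf_eq, ContinuousLinearMap.neg_apply, innerSL_apply_apply,
      neg_le_neg_iff]
    constructor
    · rintro ⟨hw, hwe⟩
      refine ⟨hw, fun y hy => ?_⟩
      rw [real_inner_comm w ν, real_inner_comm y ν]
      rw [hwe]
      exact hlow y hy
    · rintro ⟨hw, hall⟩
      refine ⟨hw, le_antisymm ?_ (hlow w hw)⟩
      have h30 := hall x₀ hx₀
      rw [real_inner_comm w ν, real_inner_comm x₀ ν] at h30
      exact h30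
  · -- finrank
    have hupper : vectorSpan ℝ Fi ≤ (ℝ ∙ ν)ᗮ := by
      rw [vectorSpan_def, Submodule.span_le]
      rintro v ⟨y, hy, z, hz, rfl⟩
      rw [SetLike.mem_coe, Submodule.mem_orthogonal_singleton_iff_inner_left]
      have : ⟪y - z, ν⟫ = 0 := by
        rw [inner_sub_left, hy.2, hz.2]; ring
      exact this
    have hKrank : Module.finrank ℝ ((ℝ ∙ ν)ᗮ : Submodule ℝ (Euc 2)) = 1 := by
      have h1 : Module.finrank ℝ (ℝ ∙ ν : Submodule ℝ (Euc 2)) = 1 := finrank_span_singleton hν0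
      have h2 := Submodule.finrank_add_finrank_orthogonal (K := (ℝ ∙ ν : Submodule ℝ (Euc 2)))
      have h3 : Module.finrank ℝ (Euc 2) = 2 := by simp
      omega
    have hvmem : y₁ -ᵥ x₀ ∈ vectorSpan ℝ Fi := vsub_mem_vectorSpan ℝ hy₁Fi hx₀Fi
    have hvne : y₁ -ᵥ x₀ ≠ 0 := by
      rw [vsub_eq_sub, sub_ne_zero]; exact hy₁ne
    have hpos : 0 < Module.finrank ℝ (vectorSpan ℝ Fi) := by
      rw [Module.finrank_pos_iff_exists_ne_zero]
      refine ⟨⟨y₁ -ᵥ x₀, hvmem⟩, fun hc => hvne ?_⟩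
      simpa [Submodule.mk_eq_zero] using hc
    have hle : Module.finrank ℝ (vectorSpan ℝ Fi) ≤ 1 := hKrank ▸ Submodule.finrank_mono hupper
    show Module.finrank ℝ (vectorSpan ℝ Fi) = 2 - 1
    omega


/-- For Delzant polygons `P i` in `ℝ²` converging in Hausdorff distance to a
Delzant polygon `Q`: for every edge of `Q` with primitive inward integral
normal `ν`, after passing to a subsequence there are edges of the `P i` whose
primitive inward integral normals `ν i` converge to `ν`, and in fact `ν i = ν`
for all sufficiently large `i`. -/
theorem stmt9 (P : ℕ → Set (Euc 2)) (Q : Set (Euc 2))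
    (hP : ∀ i, IsDelzant (P i)) (hQ : IsDelzant Q)
    (h : Tendsto (fun i => Metric.hausdorffDist (P i) Q) atTop (𝓝 0))
    (F : Set (Euc 2)) (ν : Euc 2) (lam : ℝ)
    (hνprim : IsPrimitiveVec ν)
    (hF : IsFacetWithInwardNormal Q F ν lam) :
    ∃ φ : ℕ → ℕ, StrictMono φ ∧
      ∃ (Fi : ℕ → Set (Euc 2)) (νi : ℕ → Euc 2) (lami : ℕ → ℝ),
        (∀ i, IsPrimitiveVec (νi i) ∧
          IsFacetWithInwardNormal (P (φ i)) (Fi i) (νi i) (lami i)) ∧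
        Tendsto νi atTop (𝓝 ν) ∧ (∀ᶠ i in atTop, νi i = ν) := by
  have hν0 : ν ≠ 0 := hνprim.2.1
  have hνint : IsIntegralVec ν := hνprim.1
  obtain ⟨hexp, hFne, hFrank, hQlow, hFeq⟩ := hF
  set V := ‖ν‖ with hVdef
  have hV0 : 0 < V := norm_pos_iff.mpr hν0
  -- F has two distinct points
  have hFtwo : ∃ p ∈ F, ∃ q ∈ F, p ≠ q := by
    by_contra hc
    push_neg at hc
    have hsub : F.Subsingleton := fun a ha b hb => hc a ha b hb
    have hbot : vectorSpan ℝ F = ⊥ := by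
      rcases hsub.eq_empty_or_singleton with hemp | ⟨x, hemp⟩ <;> rw [hemp] <;> simp
    rw [hbot, finrank_bot] at hFrank
    omega
  obtain ⟨p, hpF, q, hqF, hpq⟩ := hFtwo
  rw [hFeq] at hpF hqF
  have hpQ : p ∈ Q := hpF.1
  have hqQ : q ∈ Q := hqF.1
  have hfp : ⟪p, ν⟫ = lam := hpF.2
  have hfq : ⟪q, ν⟫ = lam := hqF.2
  -- interior point of Q and its height above the facet
  obtain ⟨z₀, hz₀⟩ := hQ.2.1
  obtain ⟨r, hr0, hrball⟩ := Metric.isOpen_iff.mp isOpen_interior z₀ hz₀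
  have hzQ : z₀ ∈ Q := interior_subset hz₀
  set h₀ := r * V / 2 with hh₀
  have h0pos : 0 < h₀ := by positivity
  have hz0 : lam + h₀ ≤ ⟪z₀, ν⟫ := by
    have hmem : z₀ - (r / (2*V)) • ν ∈ Q := by
      apply interior_subset
      apply hrball
      rw [Metric.mem_ball, dist_eq_norm]
      have he : z₀ - (r/(2*V)) • ν - z₀ = -((r/(2*V)) • ν) := by abel
      rw [he, norm_neg, norm_smul, Real.norm_eq_abs, abs_of_pos (by positivity : 0 < r/(2*V))]
      have he2 : r/(2*V) * ‖ν‖ = r/2 := by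
        rw [← hVdef]; field_simp
      rw [he2]; linarith
    have hlow := hQlow _ hmem
    have hinner : ⟪z₀ - (r/(2*V)) • ν, ν⟫ = ⟪z₀, ν⟫ - (r/(2*V)) * V^2 := by
      rw [inner_sub_left, real_inner_smul_left, real_inner_self_eq_norm_sq, hVdef]
    have hcv : (r/(2*V)) * V^2 = h₀ := by
      rw [hh₀]; field_simp
    rw [hinner, hcv] at hlow
    linarith
  -- Q is bounded
  obtain ⟨SQ, hSQ⟩ := hQ.1
  have hQc : IsCompact Q := hSQ ▸ SQ.finite_toSet.isCompact_convexHull ℝ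
  obtain ⟨R0, hR0sub⟩ := hQc.isBounded.subset_closedBall 0
  set R := max R0 0 with hRdef
  have hR : Q ⊆ Metric.closedBall 0 R :=
    hR0sub.trans (Metric.closedBall_subset_closedBall (le_max_left _ _))
  have hR0 : 0 ≤ R := le_max_right _ _
  set L := dist p q with hLdef
  have hLpos : 0 < L := dist_pos.mpr hpq
  set D2 := (2*R+2) * V with hD2def
  have hD2 : 0 < D2 := by positivity
  -- choice of δ
  set δ := min (min 1 (L/4)) (min (h₀/(4*V)) (L*V*h₀/(64*V^3*D2))) with hδdef
  have hδpos : 0 < δ := by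
    apply lt_min (lt_min one_pos (by positivity))
    exact lt_min (by positivity) (by positivity)
  have hδ1 : δ ≤ 1 := le_trans (min_le_left _ _) (min_le_left _ _)
  have hδL : 4 * δ ≤ L := by
    have h5 : δ ≤ L/4 := le_trans (min_le_left _ _) (min_le_right (1:ℝ) (L/4))
    linarith
  have hδh : 4 * δ * V ≤ h₀ := by
    have hd4 : δ ≤ h₀/(4*V) := le_trans (min_le_right _ _) (min_le_left _ _)
    have h5 := mul_le_mul_of_nonneg_right hd4 (by positivity : (0:ℝ) ≤ 4*V)
    have h6 : h₀/(4*V) * (4*V) = h₀ := by field_simp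
    have h7 : δ * (4*V) = 4 * δ * V := by ring
    linarith
  have hδs : 32 * δ * V^3 * D2 < L * V * h₀ := by
    have hd5 : δ ≤ L*V*h₀/(64*V^3*D2) := le_trans (min_le_right _ _) (min_le_right _ _)
    have h5 := mul_le_mul_of_nonneg_left hd5 (by positivity : (0:ℝ) ≤ 32*V^3*D2)
    have h6 : 32*V^3*D2 * (L*V*h₀/(64*V^3*D2)) = L*V*h₀/2 := by
      field_simp; ring
    have h7 : 32*V^3*D2 * δ = 32 * δ * V^3 * D2 := by ring
    have h8 : 0 < L*V*h₀ := by positivity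
    linarith
  -- pass to the tail where the Hausdorff distance is < δ
  obtain ⟨N, hN⟩ := Filter.eventually_atTop.mp (h.eventually_lt_const hδpos)
  have key : ∀ i : ℕ, ∃ Fi lami, IsFacetWithInwardNormal (P (i + N)) Fi ν lami := by
    intro i
    exact delzant_facet Q ν lam hν0 hνint hQlow p q z₀ hpQ hqQ hzQ hfp hfq
      L h₀ R δ hLdef hLpos h0pos hz0 hR hR0 hδpos hδ1 hδL hδh
      (by rw [← hVdef, ← hD2def]; exact hδs)
      (P (i + N)) (hP (i + N)) (hN (i + N) (Nat.le_add_left N i))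
  choose Fi lami hkey using key
  exact ⟨fun i => i + N, fun a b hab => Nat.add_lt_add_right hab N,
    Fi, fun _ => ν, lami, fun i => ⟨hνprim, hkey i⟩, tendsto_const_nhds,
    Filter.Eventually.of_forall fun _ => rfl⟩
end
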